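/- arXiv:1707.09277 — 5 statements merged into one kernel-verified Lean document; each statement's English description precedes it below -/
import Mathlib

section
/- Let d ≥ 1 and ϑ ∈ (0, π/2]. There exist L ∈ ℕ, an angle θ ∈ (0, π/2], and unit vectors v¹, …, v^L ∈ ℝ^d, all depending only on the dimension d and on ϑ (in fact one may take θ = ϑ/3), such that for every ϑ-bounded configuration Γ and every x ∈ ℝ^d there exists m ∈ {1, …, L} with V(v^m, θ) ⊂ Γ(x). -/
open MeasureTheory Metric
open scoped ENNReal

noncomputable section

/-- `d`-dimensional Euclidean space. -/
abbrev Euc (d : ℕ) : Type := EuclideanSpace ℝ (Fin d)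

/-- The open cone `Ṽ(v,θ)` with axis `v` and apex angle `θ`. -/
def coneSet (d : ℕ) (v : Euc d) (θ : ℝ) : Set (Euc d) :=
  {h | h ≠ 0 ∧ Real.cos θ < (inner ℝ v h : ℝ) / ‖h‖}

/-- The double cone `V(v,θ) = Ṽ(v,θ) ∪ (−Ṽ(v,θ))`. -/
def doubleCone (d : ℕ) (v : Euc d) (θ : ℝ) : Set (Euc d) :=
  {h | h ∈ coneSet d v θ ∨ -h ∈ coneSet d v θ}

/-- A configuration assigns to each point of `ℝ^d` a double cone with apex at `0`,
recorded via its (unit) symmetry axis and its apex angle in `(0, π/2]`. -/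
structure Config (d : ℕ) where
  axis : Euc d → Euc d
  angle : Euc d → ℝ
  axis_norm : ∀ x, ‖axis x‖ = 1
  angle_mem : ∀ x, angle x ∈ Set.Ioc 0 (Real.pi / 2)

/-- The double cone `Γ(x)` assigned to `x` by a configuration `Γ`. -/
def Config.cone {d : ℕ} (Γ : Config d) (x : Euc d) : Set (Euc d) :=
  doubleCone d (Γ.axis x) (Γ.angle x)

/-- `Γ` is `ϑ`-bounded: every apex angle is at least `ϑ`. -/
def Config.Bounded {d : ℕ} (Γ : Config d) (ϑ : ℝ) : Prop :=
  ∀ x, ϑ ≤ Γ.angle x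

/-- `Γ` is `ϑ`-admissible: `ϑ`-bounded and `{(x,y) | y - x ∈ Γ(x)}` is Borel. -/
def Config.Admissible {d : ℕ} (Γ : Config d) (ϑ : ℝ) : Prop :=
  Γ.Bounded ϑ ∧ MeasurableSet {p : Euc d × Euc d | p.2 - p.1 ∈ Γ.cone p.1}

/-- The indicator sum `𝟙_{V^Γ[x]}(y) + 𝟙_{V^Γ[y]}(x)`, valued in `ℝ≥0∞`. -/
def indSum {d : ℕ} (Γ : Config d) (x y : Euc d) : ℝ≥0∞ :=
  (Γ.cone x).indicator (fun _ => (1 : ℝ≥0∞)) (y - x) +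
  (Γ.cone y).indicator (fun _ => (1 : ℝ≥0∞)) (x - y)

/-- The kernel `|x - y| ^ (-d-α)` as an `ℝ≥0∞`-valued function (equal to `∞` on the diagonal). -/
def stbl (d : ℕ) (α : ℝ) (x y : Euc d) : ℝ≥0∞ :=
  (ENNReal.ofReal (dist x y)) ^ (-(d : ℝ) - α)

/-- The embedding of the integer lattice `ℤ^d` into `ℝ^d`. -/
def latt (d : ℕ) (z : Fin d → ℤ) : Euc d :=
  (WithLp.equiv 2 (Fin d → ℝ)).symm (fun i => (z i : ℝ))

/-- The open cube `A_h(u)` of side length `h` centered at `u` (w.r.t. the max norm). -/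
def cube (d : ℕ) (h : ℝ) (u : Euc d) : Set (Euc d) :=
  {x | ∀ i, |x i - u i| < h / 2}

/-- The translate `V[x] = V + x` of a set `V`. -/
def shiftSet (d : ℕ) (V : Set (Euc d)) (x : Euc d) : Set (Euc d) :=
  {y | y - x ∈ V}

/-- The "half-set" `V_r = {y ∈ V | closedBall y r ⊆ V}` (double half-cone for `V` a double cone). -/
def halfSet (d : ℕ) (V : Set (Euc d)) (r : ℝ) : Set (Euc d) :=
  {y | y ∈ V ∧ Metric.closedBall y r ⊆ V}

/-- Adjacency of `w` and `z` in the (undirected) graph `G_U(Γ)`. -/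
def adjIn (d : ℕ) (Γ : Config d) (U : Set (Euc d)) (w z : Euc d) : Prop :=
  (w ∈ U ∧ z - w ∈ Γ.cone w) ∨ (z ∈ U ∧ w - z ∈ Γ.cone z)

/-- Adjacency of two lattice points in the graph `G(Γ)`. -/
def adjL (d : ℕ) (Γ : Config d) (w z : Fin d → ℤ) : Prop :=
  latt d z - latt d w ∈ Γ.cone (latt d w) ∨ latt d w - latt d z ∈ Γ.cone (latt d z)

/-- A lattice point `x` is `r`-`R`-connected if every lattice point within distance `r`
is connected to `x` by an undirected edge path in `G(Γ)` staying in the closed `R`-ball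
around `x`. -/
def rRConnected (d : ℕ) (Γ : Config d) (r R : ℝ) (x : Fin d → ℤ) : Prop :=
  ∀ y : Fin d → ℤ, dist (latt d y) (latt d x) ≤ r →
    ∃ (N : ℕ) (p : ℕ → Fin d → ℤ), p 0 = x ∧ p N = y ∧
      (∀ i < N, adjL d Γ (p i) (p (i + 1))) ∧
      ∀ i ≤ N, dist (latt d (p i)) (latt d x) ≤ R

/-- Sum over pairs of lattice points satisfying a predicate `P` of
`(f x - f y)² K x y`, valued in `ℝ≥0∞`. -/
def dSum (d : ℕ) (f : (Fin d → ℤ) → ℝ) (K : (Fin d → ℤ) → (Fin d → ℤ) → ℝ≥0∞)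
    (P : (Fin d → ℤ) → (Fin d → ℤ) → Prop) : ℝ≥0∞ :=
  ∑' q : (Fin d → ℤ) × (Fin d → ℤ),
    Set.indicator {q : (Fin d → ℤ) × (Fin d → ℤ) | P q.1 q.2}
      (fun q => ENNReal.ofReal ((f q.1 - f q.2) ^ 2) * K q.1 q.2) q


open scoped RealInnerProductSpace in
lemma cos_add_lt_inner {d : ℕ} (u w h : EuclideanSpace ℝ (Fin d))
    (hu : ‖u‖ = 1) (hw : ‖w‖ = 1) (hh : ‖h‖ = 1)
    (a b : ℝ) (ha0 : 0 ≤ a) (ha : a ≤ Real.pi / 2) (hb0 : 0 ≤ b) (hb : b ≤ Real.pi / 2)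
    (h1 : Real.cos a < ⟪w, u⟫) (h2 : Real.cos b < ⟪w, h⟫) :
    Real.cos (a + b) < ⟪u, h⟫ := by
  set c : ℝ := ⟪w, u⟫ with hc
  set e : ℝ := ⟪w, h⟫ with he
  have hca : 0 ≤ Real.cos a := Real.cos_nonneg_of_mem_Icc ⟨by linarith [Real.pi_pos], ha⟩
  have hcb : 0 ≤ Real.cos b := Real.cos_nonneg_of_mem_Icc ⟨by linarith [Real.pi_pos], hb⟩
  have hsa : 0 ≤ Real.sin a := Real.sin_nonneg_of_nonneg_of_le_pi ha0 (by linarith [Real.pi_pos])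
  have hsb : 0 ≤ Real.sin b := Real.sin_nonneg_of_nonneg_of_le_pi hb0 (by linarith [Real.pi_pos])
  have hww : ⟪w, w⟫ = 1 := by
    rw [real_inner_self_eq_norm_sq, hw]; norm_num
  have hdec : ⟪u, h⟫ = c * e + ⟪u - c • w, h - e • w⟫ := by
    rw [inner_sub_left, inner_sub_right, inner_sub_right]
    simp only [real_inner_smul_left, real_inner_smul_right, hww]
    rw [real_inner_comm w u, ← hc, ← he]
    ring
  have hnu : ‖u - c • w‖ = Real.sqrt (1 - c ^ 2) := by
    rw [← Real.sqrt_sq (norm_nonneg _)]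
    congr 1
    rw [norm_sub_sq_real]
    simp only [real_inner_smul_right, norm_smul, hu, hw, Real.norm_eq_abs]
    rw [real_inner_comm w u, ← hc, mul_one, sq_abs]; ring
  have hnh : ‖h - e • w‖ = Real.sqrt (1 - e ^ 2) := by
    rw [← Real.sqrt_sq (norm_nonneg _)]
    congr 1
    rw [norm_sub_sq_real]
    simp only [real_inner_smul_right, norm_smul, hh, hw, Real.norm_eq_abs]
    rw [real_inner_comm w h, ← he, mul_one, sq_abs]; ring
  have hCS : -(Real.sqrt (1 - c ^ 2) * Real.sqrt (1 - e ^ 2)) ≤ ⟪u - c • w, h - e • w⟫ := by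
    have h3 := abs_real_inner_le_norm (u - c • w) (h - e • w)
    rw [hnu, hnh] at h3
    linarith [neg_abs_le (⟪u - c • w, h - e • w⟫)]
  have hs1 : Real.sqrt (1 - c ^ 2) ≤ Real.sin a := by
    have hle : 1 - c ^ 2 ≤ Real.sin a ^ 2 := by
      have := Real.sin_sq_add_cos_sq a; nlinarith
    calc Real.sqrt (1 - c ^ 2) ≤ Real.sqrt (Real.sin a ^ 2) := Real.sqrt_le_sqrt hle
      _ = Real.sin a := Real.sqrt_sq hsa
  have hs2 : Real.sqrt (1 - e ^ 2) ≤ Real.sin b := by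
    have hle : 1 - e ^ 2 ≤ Real.sin b ^ 2 := by
      have := Real.sin_sq_add_cos_sq b; nlinarith
    calc Real.sqrt (1 - e ^ 2) ≤ Real.sqrt (Real.sin b ^ 2) := Real.sqrt_le_sqrt hle
      _ = Real.sin b := Real.sqrt_sq hsb
  have hA : Real.cos a * Real.cos b < c * e := by nlinarith
  have hB : Real.sqrt (1 - c ^ 2) * Real.sqrt (1 - e ^ 2) ≤ Real.sin a * Real.sin b :=
    mul_le_mul hs1 hs2 (Real.sqrt_nonneg _) hsa
  rw [Real.cos_add]
  linarith [hdec, hCS]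

open scoped RealInnerProductSpace in
lemma coneSet_subset_aux {d : ℕ} (ϑ : ℝ) (hϑ : ϑ ∈ Set.Ioc 0 (Real.pi / 2))
    (u w : Euc d) (hu : ‖u‖ = 1) (hw : ‖w‖ = 1) (hwu : Real.cos (2 * ϑ / 3) < ⟪w, u⟫)
    (φ : ℝ) (hφ1 : ϑ ≤ φ) (hφ2 : φ ≤ Real.pi / 2) :
    coneSet d w (ϑ / 3) ⊆ coneSet d u φ := by
  rintro h ⟨hh0, hh⟩
  refine ⟨hh0, ?_⟩
  have hn : (0:ℝ) < ‖h‖ := norm_pos_iff.mpr hh0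
  set g : Euc d := ‖h‖⁻¹ • h with hg
  have hgn : ‖g‖ = 1 := by
    rw [hg, norm_smul, norm_inv, norm_norm, inv_mul_cancel₀ hn.ne']
  have hwg : Real.cos (ϑ / 3) < ⟪w, g⟫ := by
    rw [hg, real_inner_smul_right, inv_mul_eq_div]
    exact hh
  have hpi := Real.pi_pos
  have hkey : Real.cos (2 * ϑ / 3 + ϑ / 3) < ⟪u, g⟫ :=
    cos_add_lt_inner u w g hu hw hgn (2 * ϑ / 3) (ϑ / 3)
      (by linarith [hϑ.1.le]) (by linarith [hϑ.2]) (by linarith [hϑ.1.le])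
      (by linarith [hϑ.2]) hwu hwg
  have hϑeq : 2 * ϑ / 3 + ϑ / 3 = ϑ := by ring
  rw [hϑeq] at hkey
  have hmono : Real.cos φ ≤ Real.cos ϑ :=
    Real.cos_le_cos_of_nonneg_of_le_pi hϑ.1.le (by linarith) hφ1
  have heq : ⟪u, g⟫ = (inner ℝ u h : ℝ) / ‖h‖ := by
    rw [hg, real_inner_smul_right, inv_mul_eq_div]
  rw [heq] at hkey
  linarith

/-- Lemma 2.2: a finite family of reference cones, depending only on `d` and
`ϑ`, such that every cone of any `ϑ`-bounded configuration contains one of them. -/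
theorem stmt4 (d : ℕ) (hd : 1 ≤ d) (ϑ : ℝ) (hϑ : ϑ ∈ Set.Ioc 0 (Real.pi / 2)) :
    ∃ (L : ℕ) (θ : ℝ) (v : Fin L → Euc d), 0 < L ∧ θ ∈ Set.Ioc 0 (Real.pi / 2) ∧ θ = ϑ / 3 ∧
      (∀ m, ‖v m‖ = 1) ∧
      ∀ Γ : Config d, Γ.Bounded ϑ → ∀ x : Euc d,
        ∃ m : Fin L, doubleCone d (v m) θ ⊆ Γ.cone x := by
  classical
  have hpi := Real.pi_pos
  set S : Set (Euc d) := Metric.sphere (0 : Euc d) 1 with hS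
  have hScpt : IsCompact S := isCompact_sphere _ _
  have hSne : S.Nonempty := by
    refine ⟨EuclideanSpace.single (⟨0, hd⟩ : Fin d) (1 : ℝ), ?_⟩
    simp [hS, EuclideanSpace.norm_single]
  have hopen : ∀ i ∈ S, IsOpen {y : Euc d | Real.cos (2 * ϑ / 3) < (inner ℝ i y : ℝ)} :=
    fun i _ => isOpen_lt continuous_const (continuous_const.inner continuous_id)
  have hcover : S ⊆ ⋃ i ∈ S, {y : Euc d | Real.cos (2 * ϑ / 3) < (inner ℝ i y : ℝ)} := by
    intro y hy
    refine Set.mem_biUnion hy ?_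
    have hy1 : ‖y‖ = 1 := by simpa [hS] using hy
    have : (inner ℝ y y : ℝ) = 1 := by
      rw [real_inner_self_eq_norm_sq, hy1]; norm_num
    have hlt : Real.cos (2 * ϑ / 3) < 1 := by
      have := Real.cos_lt_cos_of_nonneg_of_le_pi (le_refl 0) (by linarith [hϑ.2] : 2 * ϑ / 3 ≤ Real.pi)
        (by linarith [hϑ.1] : (0:ℝ) < 2 * ϑ / 3)
      simpa using this
    simpa only [Set.mem_setOf_eq, this] using hlt
  obtain ⟨b, hbS, hbfin, hbcov⟩ := hScpt.elim_finite_subcover_image hopen hcover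
  set t : Finset (Euc d) := hbfin.toFinset with ht
  have htne : t.Nonempty := by
    obtain ⟨y, hy⟩ := hSne
    obtain ⟨i, hi, _⟩ := Set.mem_iUnion₂.mp (hbcov hy)
    exact ⟨i, hbfin.mem_toFinset.mpr hi⟩
  refine ⟨t.card, ϑ / 3, fun m => (t.equivFin.symm m : Euc d), ?_, ?_, rfl, ?_, ?_⟩
  · exact Finset.card_pos.mpr htne
  · exact ⟨by linarith [hϑ.1], by linarith [hϑ.2]⟩
  · intro m
    have hmem : ((t.equivFin.symm m : Euc d)) ∈ t := (t.equivFin.symm m).2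
    have : (t.equivFin.symm m : Euc d) ∈ S := hbS (hbfin.mem_toFinset.mp hmem)
    simpa [hS] using this
  · intro Γ hΓ x
    set u := Γ.axis x with hu
    have huS : u ∈ S := by simp [hS, hu, Γ.axis_norm x]
    obtain ⟨i, hi, hiu⟩ := Set.mem_iUnion₂.mp (hbcov huS)
    have hit : i ∈ t := hbfin.mem_toFinset.mpr hi
    refine ⟨t.equivFin ⟨i, hit⟩, ?_⟩
    have hvm : ((fun m => ((t.equivFin.symm m : Euc d))) (t.equivFin ⟨i, hit⟩)) = i := by simp
    rw [hvm]
    have hiw : ‖i‖ = 1 := by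
      have := hbS hi
      simpa [hS, mem_sphere_zero_iff_norm] using this
    have hsub : coneSet d i (ϑ / 3) ⊆ coneSet d u (Γ.angle x) :=
      coneSet_subset_aux ϑ hϑ u i (Γ.axis_norm x) hiw
        hiu (Γ.angle x) (hΓ x) (Γ.angle_mem x).2
    intro h hh
    rcases hh with hh | hh
    · exact Or.inl (hsub hh)
    · exact Or.inr (hsub hh)
end
end

section
/- Let d ≥ 1, ϑ ∈ (0, π/2], and let Γ be a ϑ-bounded configuration on ℝ^d. Then there exists a configuration Γ̃ : ℝ^d → 𝒱 such that the image Γ̃(ℝ^d) is a finite set of double cones, each of apex angle ϑ/3, its cardinality is bounded by a constant depending only on d and ϑ, and Γ̃(x) ⊂ Γ(x) for every x ∈ ℝ^d. -/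
open MeasureTheory Metric
open scoped ENNReal

noncomputable section

lemma coneSet_subset (d : ℕ) (u v : Euc d) (θ θ' : ℝ)
    (hvu : ‖u - v‖ < Real.cos θ' - Real.cos θ) :
    coneSet d v θ' ⊆ coneSet d u θ := by
  rintro h ⟨hne, hlt⟩
  refine ⟨hne, ?_⟩
  have hc : (0:ℝ) < ‖h‖ := norm_pos_iff.mpr hne
  rw [lt_div_iff₀ hc] at hlt ⊢
  have h1 : |(inner ℝ (u - v) h : ℝ)| ≤ ‖u - v‖ * ‖h‖ := abs_real_inner_le_norm _ _
  have h2 : (inner ℝ (u - v) h : ℝ) = (inner ℝ u h : ℝ) - (inner ℝ v h : ℝ) :=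
    inner_sub_left u v h
  have h3 := neg_abs_le ((inner ℝ (u - v) h : ℝ))
  nlinarith [hc, hlt]

/-- Corollary 2.4: a `ϑ`-bounded configuration contains a sub-configuration
with finite image, consisting of double cones of apex angle `ϑ/3`, whose cardinality is bounded
by a constant depending only on `d` and `ϑ`. -/
theorem stmt5 (d : ℕ) (hd : 1 ≤ d) (ϑ : ℝ) (hϑ : ϑ ∈ Set.Ioc 0 (Real.pi / 2)) :
    ∃ L : ℕ, ∀ Γ : Config d, Γ.Bounded ϑ →
      ∃ Γ' : Config d, (∀ x, Γ'.angle x = ϑ / 3) ∧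
        (Set.range Γ'.cone).Finite ∧ (Set.range Γ'.cone).ncard ≤ L ∧
        ∀ x, Γ'.cone x ⊆ Γ.cone x := by
  obtain ⟨hϑ, hϑ2⟩ := hϑ
  set ε : ℝ := Real.cos (ϑ/3) - Real.cos ϑ with hεdef
  have hε : 0 < ε := by
    show (0:ℝ) < Real.cos (ϑ/3) - Real.cos ϑ
    have : Real.cos ϑ < Real.cos (ϑ/3) := by
      apply Real.cos_lt_cos_of_nonneg_of_le_pi (by linarith) ?_ (by linarith)
      linarith [Real.pi_pos]
    linarith
  obtain ⟨t, hts, htf, htcov⟩ :=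
    (isCompact_sphere (0 : Euc d) 1).finite_cover_balls hε
  refine ⟨htf.toFinset.card, fun Γ hΓ => ?_⟩
  have hx : ∀ x, ∃ v, v ∈ t ∧ Γ.axis x ∈ Metric.ball v ε := by
    intro x
    have : Γ.axis x ∈ Metric.sphere (0 : Euc d) 1 := by
      simp [mem_sphere_zero_iff_norm, Γ.axis_norm x]
    have := htcov this
    simpa using this
  choose f hf1 hf2 using hx
  have hfn : ∀ x, ‖f x‖ = 1 := fun x =>
    mem_sphere_zero_iff_norm.mp (hts (hf1 x))
  refine ⟨⟨f, fun _ => ϑ/3, hfn, fun _ => ⟨by linarith, by linarith⟩⟩,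
    fun _ => rfl, ?_, ?_, ?_⟩
  · apply Set.Finite.subset (htf.image (fun v => doubleCone d v (ϑ/3)))
    rintro _ ⟨x, rfl⟩
    exact ⟨f x, hf1 x, rfl⟩
  · calc (Set.range _).ncard ≤ ((fun v => doubleCone d v (ϑ/3)) '' t).ncard := by
          apply Set.ncard_le_ncard ?_ (htf.image _)
          rintro _ ⟨x, rfl⟩; exact ⟨f x, hf1 x, rfl⟩
      _ ≤ t.ncard := Set.ncard_image_le htf
      _ = htf.toFinset.card := Set.ncard_eq_toFinset_card t htf
  · intro x h hh
    have key : coneSet d (f x) (ϑ/3) ⊆ coneSet d (Γ.axis x) (Γ.angle x) := by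
      apply coneSet_subset
      have hdist : ‖Γ.axis x - f x‖ < Real.cos (ϑ/3) - Real.cos ϑ := by
        have := hf2 x
        rwa [Metric.mem_ball, dist_eq_norm] at this
      have hcos : Real.cos (Γ.angle x) ≤ Real.cos ϑ := by
        apply Real.cos_le_cos_of_nonneg_of_le_pi (by linarith) ?_ (hΓ x)
        linarith [(Γ.angle_mem x).2, Real.pi_pos]
      linarith
    rcases hh with hh | hh
    · exact Or.inl (key hh)
    · exact Or.inr (key hh)
end
end

section
/- Let V ⊂ ℝ^d be a double cone with apex at 0 and let h > 0. Then for every x ∈ ℝ^d and every ξ ∈ A_h(x) one has V_{h√d}[ξ] ⊂ V_{(h/2)√d}[x] ⊂ V[ξ]. Equivalently, ⋃_{ξ ∈ A_h(x)} V_{h√d}[ξ] ⊂ V_{(h/2)√d}[x] ⊂ ⋂_{ξ ∈ A_h(x)} V[ξ]. -/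
open MeasureTheory Metric
open scoped ENNReal

noncomputable section

lemma cube_norm_le {d : ℕ} {h : ℝ} (hh : 0 < h) {x ξ : Euc d} (hξ : ξ ∈ cube d h x) :
    ‖ξ - x‖ ≤ h / 2 * Real.sqrt d := by
  have h1 : ∑ i, ‖(ξ - x) i‖ ^ 2 ≤ (d : ℝ) * (h / 2) ^ 2 := by
    calc ∑ i, ‖(ξ - x) i‖ ^ 2 ≤ ∑ _i : Fin d, (h / 2) ^ 2 := by
          apply Finset.sum_le_sum
          intro i _
          have := hξ i
          have h2 : ‖(ξ - x) i‖ = |ξ i - x i| := by simp [Real.norm_eq_abs]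
          rw [h2]
          exact pow_le_pow_left₀ (abs_nonneg _) (le_of_lt this) 2
      _ = (d : ℝ) * (h / 2) ^ 2 := by simp [Finset.sum_const]
  rw [EuclideanSpace.norm_eq]
  calc Real.sqrt (∑ i, ‖(ξ - x) i‖ ^ 2) ≤ Real.sqrt ((d : ℝ) * (h / 2) ^ 2) :=
        Real.sqrt_le_sqrt h1
    _ = h / 2 * Real.sqrt d := by
        rw [Real.sqrt_mul (Nat.cast_nonneg d), Real.sqrt_sq (by positivity)]
        ring

/-- Lemma 2.5: for every `ξ` in the cube `A_h(x)`,
`V_{h√d}[ξ] ⊆ V_{(h/2)√d}[x] ⊆ V[ξ]`. -/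
theorem stmt6 (d : ℕ) (hd : 1 ≤ d) (v : Euc d) (hv : ‖v‖ = 1) (θ : ℝ)
    (hθ : θ ∈ Set.Ioc 0 (Real.pi / 2)) (h : ℝ) (hh : 0 < h)
    (x ξ : Euc d) (hξ : ξ ∈ cube d h x) :
    shiftSet d (halfSet d (doubleCone d v θ) (h * Real.sqrt d)) ξ ⊆
      shiftSet d (halfSet d (doubleCone d v θ) (h / 2 * Real.sqrt d)) x ∧
    shiftSet d (halfSet d (doubleCone d v θ) (h / 2 * Real.sqrt d)) x ⊆
      shiftSet d (doubleCone d v θ) ξ := by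
  have hle : ‖ξ - x‖ ≤ h / 2 * Real.sqrt d := cube_norm_le hh hξ
  have hs : (1 : ℝ) ≤ Real.sqrt d := by
    rw [show (1:ℝ) = Real.sqrt 1 by simp]
    exact Real.sqrt_le_sqrt (by exact_mod_cast hd)
  constructor
  · intro y hy
    obtain ⟨hy1, hy2⟩ := hy
    have hsub : Metric.closedBall (y - x) (h / 2 * Real.sqrt d) ⊆
        Metric.closedBall (y - ξ) (h * Real.sqrt d) := by
      intro z hz
      rw [Metric.mem_closedBall] at hz ⊢
      calc dist z (y - ξ) ≤ dist z (y - x) + dist (y - x) (y - ξ) := dist_triangle _ _ _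
        _ ≤ h / 2 * Real.sqrt d + h / 2 * Real.sqrt d := by
            apply add_le_add hz
            rw [dist_eq_norm]
            have : y - x - (y - ξ) = ξ - x := by abel
            rw [this]; exact hle
        _ = h * Real.sqrt d := by ring
    refine ⟨?_, fun z hz => hy2 (hsub hz)⟩
    apply hy2
    rw [Metric.mem_closedBall, dist_eq_norm]
    have : y - x - (y - ξ) = ξ - x := by abel
    rw [this]
    calc ‖ξ - x‖ ≤ h / 2 * Real.sqrt d := hle
      _ ≤ h * Real.sqrt d := by nlinarith [Real.sqrt_nonneg (d:ℝ)]
  · intro y hy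
    obtain ⟨hy1, hy2⟩ := hy
    apply hy2
    rw [Metric.mem_closedBall, dist_eq_norm]
    have : y - ξ - (y - x) = x - ξ := by abel
    rw [this]
    rw [show x - ξ = -(ξ - x) by abel, norm_neg]
    exact hle
end
end

section
/- Let d ≥ 1, ϑ ∈ (0, π/2], α ∈ (0,2), Λ ≥ 1, let Γ be a ϑ-admissible configuration and let k : ℝ^d × ℝ^d → [0,∞] be measurable, symmetric, and satisfy condition (A). Then there exist a constant C = C(d,ϑ) > 0, an angle ϑ' ∈ (0, π/2] depending only on d and ϑ (not otherwise on Γ), and a ϑ'-bounded configuration Γ' such that for all x, y ∈ ℤ^d with |x − y| > √d: C Λ^{−1} (𝟙_{V^{Γ'}[x]}(y) + 𝟙_{V^{Γ'}[y]}(x)) |x−y|^{−d−α} ≤ ω^k_1(x,y), where ω^k_1(x,y) = ∫_{A_1(x) × A_1(y)} k(s,t) ds dt. -/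
set_option maxHeartbeats 2000000


open MeasureTheory Metric
open scoped ENNReal

noncomputable section

lemma box_eq_preimage (d : ℕ) (a b : Fin d → ℝ) :
    {t : Euc d | ∀ i, t i ∈ Set.Ioo (a i) (b i)} =
      (MeasurableEquiv.toLp 2 (Fin d → ℝ)).symm ⁻¹' (Set.univ.pi fun i => Set.Ioo (a i) (b i)) := by
  ext t
  simp [Set.mem_pi]

lemma box_meas (d : ℕ) (a b : Fin d → ℝ) :
    MeasurableSet {t : Euc d | ∀ i, t i ∈ Set.Ioo (a i) (b i)} := by
  rw [box_eq_preimage]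
  exact (MeasurableEquiv.toLp 2 (Fin d → ℝ)).symm.measurable
    (MeasurableSet.univ_pi fun i => measurableSet_Ioo)

lemma vol_box (d : ℕ) (a : Fin d → ℝ) (r : ℝ) :
    volume {t : Euc d | ∀ i, t i ∈ Set.Ioo (a i) (a i + r)} = (ENNReal.ofReal r)^d := by
  rw [box_eq_preimage,
    (EuclideanSpace.volume_preserving_symm_measurableEquiv_toLp (Fin d)).measure_preimage
      (MeasurableSet.univ_pi fun i => measurableSet_Ioo).nullMeasurableSet]
  rw [volume_pi_pi]
  simp

lemma cube_eq (d : ℕ) (u : Euc d) :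
    cube d 1 u = {t : Euc d | ∀ i, t i ∈ Set.Ioo (u i - 1/2) ((u i - 1/2) + 1)} := by
  ext t
  simp only [cube, Set.mem_setOf_eq, Set.mem_Ioo]
  refine forall_congr' fun i => ?_
  rw [abs_lt]
  constructor <;> rintro ⟨h1, h2⟩ <;> constructor <;> linarith

lemma cube_dist {d : ℕ} {u s : Euc d} (hs : s ∈ cube d 1 u) : dist s u ≤ Real.sqrt d / 2 := by
  rw [EuclideanSpace.dist_eq]
  have h1 : ∑ i, dist (s i) (u i) ^ 2 ≤ (d : ℝ) * (1/2)^2 := by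
    calc ∑ i, dist (s i) (u i) ^ 2 ≤ ∑ _i : Fin d, ((1:ℝ)/2)^2 := by
          refine Finset.sum_le_sum fun i _ => ?_
          have := hs i
          rw [Real.dist_eq]
          nlinarith [abs_nonneg (s i - u i)]
      _ = (d : ℝ) * (1/2)^2 := by simp [Finset.card_univ]
  calc Real.sqrt (∑ i, dist (s i) (u i) ^ 2) ≤ Real.sqrt ((d:ℝ) * (1/2)^2) :=
        Real.sqrt_le_sqrt h1
    _ = Real.sqrt d * (1/2) := by
        rw [Real.sqrt_mul (Nat.cast_nonneg d), Real.sqrt_sq (by norm_num)]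
    _ = Real.sqrt d / 2 := by ring

lemma geom {d : ℕ} (ϑ θ c : ℝ) (hϑ0 : 0 < ϑ) (hϑ2 : ϑ ≤ Real.pi/2) (hθ1 : ϑ ≤ θ)
    (hθ2 : θ ≤ Real.pi/2) (hc_def : c = Real.cos (ϑ/2) - Real.cos ϑ)
    (v w h e : Euc d) (hv : ‖v‖ = 1) (hh : h ≠ 0)
    (hwh : ‖h‖ * Real.cos (ϑ/2) < (inner ℝ w h : ℝ))
    (hvw : ‖v - w‖ ≤ c/4)
    (he : ‖e‖ ≤ ‖h‖ * (c/4)) :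
    h + e ≠ 0 ∧ Real.cos θ < (inner ℝ v (h + e) : ℝ) / ‖h + e‖ := by
  have hpi : 0 < Real.pi := Real.pi_pos
  have hc : 0 < c := by
    have : Real.cos ϑ < Real.cos (ϑ/2) :=
      Real.cos_lt_cos_of_nonneg_of_le_pi (by linarith) (by linarith) (by linarith)
    linarith
  have hcosϑ0 : 0 ≤ Real.cos ϑ := Real.cos_nonneg_of_mem_Icc ⟨by linarith, hϑ2⟩
  have hc1 : c ≤ 1 := by have := Real.cos_le_one (ϑ/2); linarith
  have hD : 0 < ‖h‖ := norm_pos_iff.2 hh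
  have hexp : (inner ℝ v (h+e) : ℝ) = (inner ℝ w h : ℝ) + (inner ℝ (v-w) h : ℝ) + (inner ℝ v e : ℝ) := by
    rw [inner_add_right, inner_sub_left]; ring
  have hb1 : -(‖v-w‖ * ‖h‖) ≤ (inner ℝ (v-w) h : ℝ) := by
    have := abs_real_inner_le_norm (v-w) h
    cases abs_le.1 this with
    | intro h1 h2 => linarith
  have hb2 : -(‖e‖) ≤ (inner ℝ v e : ℝ) := by
    have := abs_real_inner_le_norm v e
    rw [hv, one_mul] at this
    cases abs_le.1 this with
    | intro h1 h2 => linarith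
  have hvwD : ‖v-w‖ * ‖h‖ ≤ (c/4) * ‖h‖ := mul_le_mul_of_nonneg_right hvw hD.le
  have hin : ‖h‖ * (Real.cos ϑ + c/2) < (inner ℝ v (h+e) : ℝ) := by
    rw [hexp]
    have hcos_half : Real.cos (ϑ/2) = Real.cos ϑ + c := by rw [hc_def]; ring
    nlinarith
  have hcmul : ‖h‖ * c ≤ ‖h‖ * 1 := mul_le_mul_of_nonneg_left hc1 hD.le
  have he' : ‖e‖ ≤ ‖h‖ * (1/4) := by nlinarith
  have hlb : ‖h‖ * (3/4) ≤ ‖h + e‖ := by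
    have htri : ‖h‖ ≤ ‖h + e‖ + ‖e‖ := by
      have h0 : h = (h + e) + (-e) := by abel
      calc ‖h‖ = ‖(h + e) + (-e)‖ := by rw [← h0]
        _ ≤ ‖h + e‖ + ‖-e‖ := norm_add_le _ _
        _ = ‖h + e‖ + ‖e‖ := by rw [norm_neg]
    linarith
  have hne : h + e ≠ 0 := by
    refine norm_pos_iff.1 ?_
    nlinarith
  have hub : ‖h + e‖ ≤ ‖h‖ * (1 + c/4) := by
    have := norm_add_le h e
    nlinarith
  have hcosθ : Real.cos θ ≤ Real.cos ϑ :=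
    Real.cos_le_cos_of_nonneg_of_le_pi (by linarith) (by linarith) hθ1
  have hcosθ0 : 0 ≤ Real.cos θ := Real.cos_nonneg_of_mem_Icc ⟨by linarith, hθ2⟩
  have hcosϑ1 : Real.cos ϑ ≤ 1 := Real.cos_le_one ϑ
  refine ⟨hne, ?_⟩
  rw [lt_div_iff₀ (by nlinarith : (0:ℝ) < ‖h + e‖)]
  refine lt_of_le_of_lt ?_ hin
  calc Real.cos θ * ‖h + e‖ ≤ Real.cos ϑ * (‖h‖ * (1 + c/4)) := by
        apply mul_le_mul hcosθ hub (by nlinarith) hcosϑ0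
    _ ≤ ‖h‖ * (Real.cos ϑ + c/4) := by nlinarith [mul_nonneg (mul_nonneg hD.le hc.le) (sub_nonneg.2 hcosϑ1)]
    _ ≤ ‖h‖ * (Real.cos ϑ + c/2) := by nlinarith

lemma stbl_bound (d : ℕ) (α : ℝ) (hα : α ∈ Set.Ioo (0:ℝ) 2) (X Y s t : Euc d)
    (h2 : dist s t ≤ 2 * dist X Y) :
    (2:ℝ≥0∞)^(-(d:ℝ)-2) * stbl d α X Y ≤ stbl d α s t := by
  have hexp : -(d:ℝ) - α = -((d:ℝ)+α) := by ring
  have h0 : (0:ℝ) ≤ (d:ℝ)+α := by have := hα.1; positivity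
  unfold stbl
  rw [hexp, ENNReal.rpow_neg, ENNReal.rpow_neg]
  have hfin : (2:ℝ≥0∞)^((d:ℝ)+2) ≠ ⊤ :=
    ENNReal.rpow_ne_top_of_nonneg (by positivity) (by norm_num)
  have hnz : (2:ℝ≥0∞)^((d:ℝ)+2) ≠ 0 :=
    ne_of_gt (ENNReal.rpow_pos (by norm_num) (by norm_num))
  have key1 : ENNReal.ofReal (dist s t) ^ ((d:ℝ)+α)
      ≤ (2:ℝ≥0∞)^((d:ℝ)+2) * ENNReal.ofReal (dist X Y) ^ ((d:ℝ)+α) := by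
    calc ENNReal.ofReal (dist s t) ^ ((d:ℝ)+α)
        ≤ ENNReal.ofReal (2 * dist X Y) ^ ((d:ℝ)+α) :=
          ENNReal.rpow_le_rpow (ENNReal.ofReal_le_ofReal h2) h0
      _ = (2:ℝ≥0∞)^((d:ℝ)+α) * ENNReal.ofReal (dist X Y) ^ ((d:ℝ)+α) := by
          rw [ENNReal.ofReal_mul (by norm_num), ENNReal.mul_rpow_of_nonneg _ _ h0,
            ENNReal.ofReal_ofNat]
      _ ≤ (2:ℝ≥0∞)^((d:ℝ)+2) * ENNReal.ofReal (dist X Y) ^ ((d:ℝ)+α) :=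
          mul_le_mul_left (ENNReal.rpow_le_rpow_of_exponent_le one_le_two (by linarith [hα.2.le])) _
  have hinv := ENNReal.inv_le_inv.mpr key1
  rw [ENNReal.mul_inv (Or.inl hnz) (Or.inl hfin)] at hinv
  calc (2:ℝ≥0∞)^(-(d:ℝ)-2) * (ENNReal.ofReal (dist X Y) ^ ((d:ℝ)+α))⁻¹
      = ((2:ℝ≥0∞)^((d:ℝ)+2))⁻¹ * (ENNReal.ofReal (dist X Y) ^ ((d:ℝ)+α))⁻¹ := by
        rw [show -(d:ℝ)-2 = -((d:ℝ)+2) by ring, ENNReal.rpow_neg]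
    _ ≤ (ENNReal.ofReal (dist s t) ^ ((d:ℝ)+α))⁻¹ := hinv

lemma cube_meas (d : ℕ) (u : Euc d) : MeasurableSet (cube d 1 u) := by
  rw [cube_eq]; exact box_meas d _ _

lemma key {d : ℕ} (hd : 1 ≤ d) (ϑ : ℝ) (hϑ : ϑ ∈ Set.Ioc 0 (Real.pi/2))
    (Γ : Config d) (hΓ : Γ.Admissible ϑ) (X Y : Euc d) (hD : Real.sqrt d < dist X Y)
    (w : Euc d)
    (hw : ∃ σ : ℝ, (σ = 1 ∨ σ = -1) ∧
      ‖Y - X‖ * Real.cos (ϑ/2) < (inner ℝ w (σ • (Y - X)) : ℝ)) :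
    volume {s | s ∈ cube d 1 X ∧ ‖Γ.axis s - w‖ ≤ (Real.cos (ϑ/2) - Real.cos ϑ)/4}
      * (ENNReal.ofReal ((Real.cos (ϑ/2) - Real.cos ϑ)/4))^d
    ≤ (volume.prod volume)
        ({p : Euc d × Euc d | p.2 - p.1 ∈ Γ.cone p.1} ∩ ((cube d 1 X) ×ˢ (cube d 1 Y))) := by
  obtain ⟨σ, hσ, hwh⟩ := hw
  have hpi := Real.pi_pos
  have hc : 0 < Real.cos (ϑ/2) - Real.cos ϑ := by
    have h1 : Real.cos ϑ < Real.cos (ϑ/2) :=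
      Real.cos_lt_cos_of_nonneg_of_le_pi (by linarith [hϑ.1]) (by linarith [hϑ.2])
        (by linarith [hϑ.1])
    linarith
  have hc1 : Real.cos (ϑ/2) - Real.cos ϑ ≤ 1 := by
    have h1 := Real.cos_le_one (ϑ/2)
    have h2 : 0 ≤ Real.cos ϑ := Real.cos_nonneg_of_mem_Icc ⟨by linarith [hϑ.1], hϑ.2⟩
    linarith
  obtain ⟨c, hc_def⟩ : ∃ x : ℝ, x = Real.cos (ϑ/2) - Real.cos ϑ := ⟨_, rfl⟩
  rw [← hc_def] at hc hc1 ⊢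
  obtain ⟨ℓ, hℓ_def⟩ : ∃ x : ℝ, x = c/4 := ⟨_, rfl⟩
  rw [← hℓ_def]
  have hℓ : 0 < ℓ := by rw [hℓ_def]; positivity
  have hℓ4 : ℓ ≤ 1/4 := by rw [hℓ_def]; linarith
  have hsd1 : (1:ℝ) ≤ Real.sqrt d := by
    rw [show (1:ℝ) = Real.sqrt 1 by simp]
    exact Real.sqrt_le_sqrt (by exact_mod_cast hd)
  have hnorm : Real.sqrt d < ‖Y - X‖ := by
    rw [show ‖Y - X‖ = dist Y X from (dist_eq_norm Y X).symm, dist_comm]; exact hD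
  have hXY : Y - X ≠ 0 := by
    intro h0
    rw [h0] at hnorm
    simp at hnorm
    linarith
  set M : Set (Euc d × Euc d) :=
    {p : Euc d × Euc d | p.2 - p.1 ∈ Γ.cone p.1} ∩ ((cube d 1 X) ×ˢ (cube d 1 Y)) with hM_def
  have hM : MeasurableSet M := hΓ.2.inter ((cube_meas d X).prod (cube_meas d Y))
  set S : Set (Euc d) := {s | s ∈ cube d 1 X ∧ ‖Γ.axis s - w‖ ≤ ℓ} with hS_def
  -- the crucial pointwise section bound
  have hsec : ∀ s ∈ S, (ENNReal.ofReal ℓ)^d ≤ volume (Prod.mk s ⁻¹' M) := by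
    intro s hs
    set a : Fin d → ℝ := fun i => (s i + (Y i - X i)) + (if 0 ≤ s i - X i then -ℓ else 0)
      with ha_def
    rw [← vol_box d a ℓ]
    refine measure_mono ?_
    intro t ht
    simp only [Set.mem_setOf_eq, Set.mem_Ioo] at ht
    -- coordinate error bounds
    have hEi : ∀ i, |t i - (s i + (Y i - X i))| ≤ ℓ := by
      intro i
      have h1 := (ht i).1
      have h2 := (ht i).2
      rw [abs_le]
      by_cases hcase : 0 ≤ s i - X i <;> simp only [ha_def, hcase, if_pos, if_neg, if_true,
        if_false, not_false_iff] at h1 h2 <;> constructor <;> linarith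
    have hsX : ∀ i, |s i - X i| < 1/2 := hs.1
    -- t ∈ cube Y
    have htY : t ∈ cube d 1 Y := by
      intro i
      have h1 := (ht i).1
      have h2 := (ht i).2
      have h3 := hsX i
      rw [abs_lt] at h3 ⊢
      by_cases hcase : 0 ≤ s i - X i <;> simp only [ha_def, hcase, if_pos, if_neg, if_true,
        if_false, not_false_iff] at h1 h2 <;> constructor <;> [skip; skip; skip; skip] <;>
        norm_num <;> linarith
    -- the error vector
    set E : Euc d := t - (s + (Y - X)) with hE_def
    have hEapp : ∀ i, E i = t i - (s i + (Y i - X i)) := by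
      intro i; simp [hE_def]
    have hEnorm : ‖E‖ ≤ Real.sqrt d * ℓ := by
      rw [EuclideanSpace.norm_eq]
      have hsum : ∑ i, ‖E i‖^2 ≤ (d:ℝ) * ℓ^2 := by
        calc ∑ i, ‖E i‖^2 ≤ ∑ _i : Fin d, ℓ^2 := by
              refine Finset.sum_le_sum fun i _ => ?_
              have := hEi i
              rw [hEapp i] at *
              rw [Real.norm_eq_abs]
              nlinarith [abs_nonneg (t i - (s i + (Y i - X i)))]
          _ = (d:ℝ) * ℓ^2 := by simp [Finset.card_univ]
      calc Real.sqrt (∑ i, ‖E i‖^2) ≤ Real.sqrt ((d:ℝ) * ℓ^2) := Real.sqrt_le_sqrt hsum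
        _ = Real.sqrt d * ℓ := by
            rw [Real.sqrt_mul (Nat.cast_nonneg d), Real.sqrt_sq hℓ.le]
    -- apply geometry
    have hσ0 : σ ≠ 0 := by rcases hσ with h|h <;> rw [h] <;> norm_num
    have hsmul_norm : ∀ z : Euc d, ‖σ • z‖ = ‖z‖ := by
      intro z; rcases hσ with h|h <;> rw [h] <;> simp
    have hgeom := geom ϑ (Γ.angle s) c hϑ.1 hϑ.2 (hΓ.1 s) ((Γ.angle_mem s).2) hc_def
      (Γ.axis s) w (σ • (Y - X)) (σ • E) (Γ.axis_norm s) (smul_ne_zero hσ0 hXY)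
      (by rw [hsmul_norm]; exact hwh) (by rw [← hℓ_def]; exact hs.2)
      (by
        rw [hsmul_norm, hsmul_norm]
        calc ‖E‖ ≤ Real.sqrt d * ℓ := hEnorm
          _ ≤ ‖Y - X‖ * (c/4) := by
              rw [← hℓ_def]
              exact mul_le_mul_of_nonneg_right hnorm.le hℓ.le)
    obtain ⟨hne, hcos⟩ := hgeom
    have hsum_eq : σ • (Y - X) + σ • E = σ • (t - s) := by
      rw [← smul_add]
      congr 1
      rw [hE_def]; abel
    rw [hsum_eq] at hne hcos
    -- conclude cone membership
    have hcone : t - s ∈ Γ.cone s := by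
      rcases hσ with h|h
      · left
        rw [h, one_smul] at hne hcos
        exact ⟨hne, hcos⟩
      · right
        rw [h, neg_smul, one_smul] at hne hcos
        exact ⟨hne, hcos⟩
    exact ⟨hcone, hs.1, htY⟩
  -- now the integral bound
  rw [Measure.prod_apply hM]
  set g : Euc d → ℝ≥0∞ := fun s => volume (Prod.mk s ⁻¹' M) with hg_def
  have hg : Measurable g := measurable_measure_prodMk_left hM
  set b : ℝ≥0∞ := (ENNReal.ofReal ℓ)^d with hb_def
  set S' : Set (Euc d) := {s | b ≤ g s} with hS'_def
  have hS' : MeasurableSet S' := measurableSet_le measurable_const hg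
  have hsub : S ⊆ S' := fun s hs => hsec s hs
  calc volume S * b ≤ volume S' * b := mul_le_mul_left (measure_mono hsub) b
    _ = ∫⁻ s, S'.indicator (fun _ => b) s := by
        rw [lintegral_indicator_const hS', mul_comm]
    _ ≤ ∫⁻ s, g s := by
        refine lintegral_mono fun s => ?_
        by_cases hsmem : s ∈ S'
        · rw [Set.indicator_of_mem hsmem]; exact hsmem
        · rw [Set.indicator_of_notMem hsmem]; exact zero_le

lemma vol_cube (d : ℕ) (u : Euc d) : volume (cube d 1 u) = 1 := by
  rw [cube_eq, vol_box]; simp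

/-- Proposition 3.5: the discretized kernel `ω₁ᵏ` admits a lower bound of
cone type, with constants `C`, `ϑ'` depending only on `d` and `ϑ`. -/
theorem stmt8 (d : ℕ) (hd : 1 ≤ d) (ϑ : ℝ) (hϑ : ϑ ∈ Set.Ioc 0 (Real.pi / 2)) :
    ∃ (C ϑ' : ℝ), 0 < C ∧ ϑ' ∈ Set.Ioc 0 (Real.pi / 2) ∧
      ∀ α ∈ Set.Ioo (0 : ℝ) 2, ∀ Λ : ℝ, 1 ≤ Λ →
        ∀ Γ : Config d, Γ.Admissible ϑ →
          ∀ k : Euc d → Euc d → ℝ≥0∞, Measurable (Function.uncurry k) →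
            (∀ x y, k x y = k y x) →
            (∀ x y, (ENNReal.ofReal Λ)⁻¹ * indSum Γ x y * stbl d α x y ≤ k x y ∧
              k x y ≤ ENNReal.ofReal Λ * stbl d α x y) →
            ∃ Γ' : Config d, Γ'.Bounded ϑ' ∧
              ∀ x y : Fin d → ℤ, Real.sqrt d < dist (latt d x) (latt d y) →
                ENNReal.ofReal C * (ENNReal.ofReal Λ)⁻¹ *
                    indSum Γ' (latt d x) (latt d y) * stbl d α (latt d x) (latt d y) ≤
                  ∫⁻ p in (cube d 1 (latt d x)) ×ˢ (cube d 1 (latt d y)), k p.1 p.2 := by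
  have hpi := Real.pi_pos
  have hc : 0 < Real.cos (ϑ/2) - Real.cos ϑ := by
    have h1 : Real.cos ϑ < Real.cos (ϑ/2) :=
      Real.cos_lt_cos_of_nonneg_of_le_pi (by linarith [hϑ.1]) (by linarith [hϑ.2])
        (by linarith [hϑ.1])
    linarith
  set ε : ℝ := (Real.cos (ϑ/2) - Real.cos ϑ)/4 with hε_def
  have hε : 0 < ε := by positivity
  -- finite net
  obtain ⟨W, hWs, hWc⟩ := (isCompact_sphere (0:Euc d) 1).elim_nhds_subcover
    (fun v => ball v ε) (fun v _ => ball_mem_nhds v hε)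
  have hnet : ∀ v : Euc d, ‖v‖ = 1 → ∃ w ∈ W, dist v w < ε := by
    intro v hv
    have h1 : v ∈ sphere (0:Euc d) 1 := by simpa [mem_sphere_zero_iff_norm] using hv
    have h2 := hWc h1
    simp only [Set.mem_iUnion, mem_ball, exists_prop] at h2
    exact h2
  have hWcard : 0 < W.card := by
    rcases Finset.eq_empty_or_nonempty W with h|h
    · exfalso
      obtain ⟨w, hw, _⟩ := hnet (EuclideanSpace.single ⟨0, hd⟩ 1)
        (by simp [EuclideanSpace.norm_single])
      simp [h] at hw
    · exact Finset.card_pos.2 h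
  set N : ℕ := W.card with hN_def
  refine ⟨(ε^d * ((2*N : ℝ))⁻¹ * 2^(-(d:ℝ)-2))/2, ϑ/2,
    by positivity, ⟨by linarith [hϑ.1], by linarith [hϑ.1, hϑ.2]⟩, ?_⟩
  intro α hα Λ hΛ Γ hΓ k hkm hksym hkA
  -- the pigeonhole choice of axes
  have hpick : ∀ z : Euc d, ∃ w : Euc d, ‖w‖ = 1 ∧
      ((2*N : ℕ) : ℝ≥0∞)⁻¹ ≤ volume {s | s ∈ cube d 1 z ∧ ‖Γ.axis s - w‖ ≤ ε} := by
    intro z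
    by_contra hcon
    push_neg at hcon
    have hcover : cube d 1 z ⊆ ⋃ w ∈ W, {s | s ∈ cube d 1 z ∧ ‖Γ.axis s - w‖ ≤ ε} := by
      intro s hs
      obtain ⟨w, hwW, hwd⟩ := hnet (Γ.axis s) (Γ.axis_norm s)
      refine Set.mem_biUnion hwW ⟨hs, ?_⟩
      rw [← dist_eq_norm]
      exact hwd.le
    have h1 : (1:ℝ≥0∞) ≤ ∑ w ∈ W, volume {s | s ∈ cube d 1 z ∧ ‖Γ.axis s - w‖ ≤ ε} := by
      calc (1:ℝ≥0∞) = volume (cube d 1 z) := (vol_cube d z).symm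
        _ ≤ volume (⋃ w ∈ W, {s | s ∈ cube d 1 z ∧ ‖Γ.axis s - w‖ ≤ ε}) := measure_mono hcover
        _ ≤ ∑ w ∈ W, volume {s | s ∈ cube d 1 z ∧ ‖Γ.axis s - w‖ ≤ ε} :=
            measure_biUnion_finset_le W _
    have h2 : ∑ w ∈ W, volume {s | s ∈ cube d 1 z ∧ ‖Γ.axis s - w‖ ≤ ε}
        ≤ N • (((2*N : ℕ) : ℝ≥0∞))⁻¹ := by
      rw [hN_def]
      refine Finset.sum_le_card_nsmul W _ _ fun w hw => ?_
      exact (hcon w (by simpa [mem_sphere_zero_iff_norm] using hWs w hw)).le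
    have h3 : N • (((2*N : ℕ) : ℝ≥0∞))⁻¹ ≤ 2⁻¹ := by
      rw [nsmul_eq_mul]
      have hcast : ((2*N : ℕ) : ℝ≥0∞) = 2 * (N : ℝ≥0∞) := by push_cast; ring
      rw [hcast, ENNReal.mul_inv (Or.inl (by norm_num)) (Or.inl (by norm_num)),
        ← mul_assoc, mul_comm (N : ℝ≥0∞) 2⁻¹, mul_assoc,
        ENNReal.mul_inv_cancel (by exact_mod_cast hWcard.ne' : (N:ℝ≥0∞) ≠ 0)
          (ENNReal.natCast_ne_top N), mul_one]
    have : (1:ℝ≥0∞) ≤ 2⁻¹ := le_trans h1 (le_trans h2 h3)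
    simp at this
  -- the new configuration
  set Γ' : Config d := ⟨fun z => (hpick z).choose, fun _ => ϑ/2,
    fun z => (hpick z).choose_spec.1,
    fun _ => ⟨by linarith [hϑ.1], by linarith [hϑ.1, hϑ.2]⟩⟩ with hΓ'_def
  refine ⟨Γ', fun z => le_refl _, ?_⟩
  intro x y hxy
  set X : Euc d := latt d x with hX_def
  set Y : Euc d := latt d y with hY_def
  set cubes : Set (Euc d × Euc d) := (cube d 1 X) ×ˢ (cube d 1 Y) with hcubes_def
  have hcubes_meas : MeasurableSet cubes := (cube_meas d X).prod (cube_meas d Y)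
  have hdistc : ∀ p : Euc d × Euc d, p ∈ cubes → dist p.1 p.2 ≤ 2 * dist X Y := by
    rintro ⟨s, t⟩ ⟨hs, ht⟩
    have h1 : dist s X ≤ Real.sqrt d / 2 := cube_dist hs
    have h2 : dist t Y ≤ Real.sqrt d / 2 := cube_dist ht
    calc dist s t ≤ dist s X + dist X Y + dist Y t := dist_triangle4 s X Y t
      _ ≤ Real.sqrt d / 2 + dist X Y + Real.sqrt d / 2 := by
          rw [dist_comm Y t]; linarith
      _ ≤ 2 * dist X Y := by linarith [hxy]
  -- the core estimate
  have core : ∀ E : Set (Euc d × Euc d), MeasurableSet E →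
      (∀ p : Euc d × Euc d, p ∈ E ∩ cubes → (1:ℝ≥0∞) ≤ indSum Γ p.1 p.2) →
      ((ENNReal.ofReal Λ)⁻¹ * ((2:ℝ≥0∞)^(-(d:ℝ)-2) * stbl d α X Y)) * volume (E ∩ cubes)
        ≤ ∫⁻ p in cubes, k p.1 p.2 := by
    intro E hE hind
    set cst : ℝ≥0∞ := (ENNReal.ofReal Λ)⁻¹ * ((2:ℝ≥0∞)^(-(d:ℝ)-2) * stbl d α X Y) with hcst_def
    have hME : MeasurableSet (E ∩ cubes) := hE.inter hcubes_meas
    have hpt : ∀ p : Euc d × Euc d, (E ∩ cubes).indicator (fun _ => cst) p ≤ k p.1 p.2 := by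
      intro p
      by_cases hp : p ∈ E ∩ cubes
      · rw [Set.indicator_of_mem hp]
        have hk1 := (hkA p.1 p.2).1
        refine le_trans ?_ hk1
        have hstbl : (2:ℝ≥0∞)^(-(d:ℝ)-2) * stbl d α X Y ≤ stbl d α p.1 p.2 :=
          stbl_bound d α hα X Y p.1 p.2 (hdistc p hp.2)
        calc cst ≤ (ENNReal.ofReal Λ)⁻¹ * stbl d α p.1 p.2 :=
              mul_le_mul_right hstbl _
          _ = (ENNReal.ofReal Λ)⁻¹ * 1 * stbl d α p.1 p.2 := by rw [mul_one]
          _ ≤ (ENNReal.ofReal Λ)⁻¹ * indSum Γ p.1 p.2 * stbl d α p.1 p.2 :=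
              mul_le_mul_left (mul_le_mul_right (hind p hp) _) _
      · rw [Set.indicator_of_notMem hp]; exact zero_le
    calc cst * volume (E ∩ cubes)
        = ∫⁻ p in cubes, (E ∩ cubes).indicator (fun _ => cst) p := by
          rw [lintegral_indicator_const hME cst, Measure.restrict_apply hME,
            Set.inter_assoc, Set.inter_self]
      _ ≤ ∫⁻ p in cubes, k p.1 p.2 := lintegral_mono hpt
  -- basic quantities
  set b : ℝ≥0∞ := (ENNReal.ofReal ε)^d with hb_def
  set m : ℝ≥0∞ := ((2*N : ℕ) : ℝ≥0∞)⁻¹ with hm_def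
  set c2 : ℝ≥0∞ := (2:ℝ≥0∞)^(-(d:ℝ)-2) with hc2_def
  have hprodvol : (volume : Measure (Euc d × Euc d)) = volume.prod volume :=
    MeasureTheory.Measure.volume_eq_prod _ _
  have hCeq : ENNReal.ofReal ((ε^d * ((2*N:ℝ))⁻¹ * 2^(-(d:ℝ)-2))/2) * 2 = b * m * c2 := by
    have hN0 : (0:ℝ) < 2*N := by positivity
    have h2d : (0:ℝ) < 2^(-(d:ℝ)-2) := by positivity
    rw [ENNReal.ofReal_div_of_pos (by norm_num), ENNReal.ofReal_ofNat,
      ENNReal.div_mul_cancel (by norm_num) (by norm_num),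
      ENNReal.ofReal_mul (by positivity), ENNReal.ofReal_mul (by positivity),
      ENNReal.ofReal_pow hε.le, ENNReal.ofReal_inv_of_pos hN0,
      ← ENNReal.ofReal_rpow_of_pos (by norm_num : (0:ℝ) < 2), ENNReal.ofReal_ofNat]
    congr 2
    rw [show ((2*N:ℝ)) = (((2*N:ℕ):ℝ)) by push_cast; ring, ENNReal.ofReal_natCast]
  have hindle2 : indSum Γ' X Y ≤ 2 := by
    rw [indSum]
    have g1 : ∀ (A : Set (Euc d)) (z : Euc d),
        A.indicator (fun _ => (1:ℝ≥0∞)) z ≤ 1 := by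
      intro A z
      by_cases hz : z ∈ A
      · rw [Set.indicator_of_mem hz]
      · rw [Set.indicator_of_notMem hz]; exact zero_le
    calc _ ≤ (1:ℝ≥0∞) + 1 := add_le_add (g1 _ _) (g1 _ _)
      _ = 2 := by norm_num
  have hpos : (0:ℝ) < ‖Y - X‖ := by
    have h1 : (1:ℝ) ≤ Real.sqrt d := by
      rw [show (1:ℝ) = Real.sqrt 1 by simp]
      exact Real.sqrt_le_sqrt (by exact_mod_cast hd)
    have : dist X Y ≤ ‖Y - X‖ := by
      rw [show ‖Y - X‖ = dist Y X from (dist_eq_norm Y X).symm, dist_comm]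
    linarith
  -- a uniform way to finish given a measurable set E with the right properties
  have finish : ∀ E : Set (Euc d × Euc d), MeasurableSet E →
      (∀ p : Euc d × Euc d, p ∈ E ∩ cubes → (1:ℝ≥0∞) ≤ indSum Γ p.1 p.2) →
      m * b ≤ volume (E ∩ cubes) →
      ENNReal.ofReal ((ε^d * ((2*N:ℝ))⁻¹ * 2^(-(d:ℝ)-2))/2) * (ENNReal.ofReal Λ)⁻¹ *
        indSum Γ' X Y * stbl d α X Y ≤ ∫⁻ p in cubes, k p.1 p.2 := by
    intro E hE hind hvol
    calc ENNReal.ofReal ((ε^d * ((2*N:ℝ))⁻¹ * 2^(-(d:ℝ)-2))/2) * (ENNReal.ofReal Λ)⁻¹ *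
          indSum Γ' X Y * stbl d α X Y
        ≤ ENNReal.ofReal ((ε^d * ((2*N:ℝ))⁻¹ * 2^(-(d:ℝ)-2))/2) * (ENNReal.ofReal Λ)⁻¹ *
          2 * stbl d α X Y := mul_le_mul_left (mul_le_mul_right hindle2 _) _
      _ = (ENNReal.ofReal ((ε^d * ((2*N:ℝ))⁻¹ * 2^(-(d:ℝ)-2))/2) * 2) *
          ((ENNReal.ofReal Λ)⁻¹ * stbl d α X Y) := by ring
      _ = (b * m * c2) * ((ENNReal.ofReal Λ)⁻¹ * stbl d α X Y) := by rw [hCeq]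
      _ = ((ENNReal.ofReal Λ)⁻¹ * (c2 * stbl d α X Y)) * (m * b) := by ring
      _ ≤ ((ENNReal.ofReal Λ)⁻¹ * (c2 * stbl d α X Y)) * volume (E ∩ cubes) :=
          mul_le_mul_right hvol _
      _ ≤ ∫⁻ p in cubes, k p.1 p.2 := core E hE hind
  -- now the case analysis
  by_cases h1 : Y - X ∈ Γ'.cone X
  · -- forward cone case
    set w : Euc d := Γ'.axis X with hw_def
    have hw : ∃ σ : ℝ, (σ = 1 ∨ σ = -1) ∧
        ‖Y - X‖ * Real.cos (ϑ/2) < (inner ℝ w (σ • (Y - X)) : ℝ) := by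
      rcases h1 with hmem | hmem
      · refine ⟨1, Or.inl rfl, ?_⟩
        rw [one_smul]
        have := (lt_div_iff₀ hpos).1 hmem.2
        linarith
      · refine ⟨-1, Or.inr rfl, ?_⟩
        rw [neg_one_smul]
        have h2' := hmem.2
        rw [norm_neg] at h2'
        have := (lt_div_iff₀ hpos).1 h2'
        linarith
    set E : Set (Euc d × Euc d) := {p : Euc d × Euc d | p.2 - p.1 ∈ Γ.cone p.1} with hE_def
    have hE : MeasurableSet E := hΓ.2
    refine finish E hE ?_ ?_
    · rintro p ⟨hp1, _⟩
      have hp1' : p.2 - p.1 ∈ Γ.cone p.1 := hp1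
      rw [indSum, Set.indicator_of_mem hp1']
      exact le_self_add
    · have hkey := key hd ϑ hϑ Γ hΓ X Y hxy w hw
      have hm : m ≤ volume {s | s ∈ cube d 1 X ∧
          ‖Γ.axis s - w‖ ≤ (Real.cos (ϑ/2) - Real.cos ϑ)/4} := (hpick X).choose_spec.2
      calc m * b ≤ volume {s | s ∈ cube d 1 X ∧
              ‖Γ.axis s - w‖ ≤ (Real.cos (ϑ/2) - Real.cos ϑ)/4} * b :=
            mul_le_mul_left hm b
        _ ≤ (volume.prod volume) (E ∩ cubes) := hkey
        _ = volume (E ∩ cubes) := by rw [← hprodvol]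
  · by_cases h2 : X - Y ∈ Γ'.cone Y
    · -- reverse cone case
      set w : Euc d := Γ'.axis Y with hw_def
      have hposYX : (0:ℝ) < ‖X - Y‖ := by
        rw [show ‖X - Y‖ = ‖Y - X‖ from norm_sub_rev X Y]; exact hpos
      have hw : ∃ σ : ℝ, (σ = 1 ∨ σ = -1) ∧
          ‖X - Y‖ * Real.cos (ϑ/2) < (inner ℝ w (σ • (X - Y)) : ℝ) := by
        rcases h2 with hmem | hmem
        · refine ⟨1, Or.inl rfl, ?_⟩
          rw [one_smul]
          have := (lt_div_iff₀ hposYX).1 hmem.2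
          linarith
        · refine ⟨-1, Or.inr rfl, ?_⟩
          rw [neg_one_smul]
          have h2' := hmem.2
          rw [norm_neg] at h2'
          have := (lt_div_iff₀ hposYX).1 h2'
          linarith
      set E : Set (Euc d × Euc d) := {p : Euc d × Euc d | p.2 - p.1 ∈ Γ.cone p.1} with hE_def
      have hE : MeasurableSet E := hΓ.2
      set E2 : Set (Euc d × Euc d) := Prod.swap ⁻¹' E with hE2_def
      have hE2 : MeasurableSet E2 := hE.preimage measurable_swap
      refine finish E2 hE2 ?_ ?_
      · rintro p ⟨hp1, _⟩
        have hp1' : p.1 - p.2 ∈ Γ.cone p.2 := hp1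
        rw [indSum, Set.indicator_of_mem hp1']
        exact le_add_self
      · have hkey := key hd ϑ hϑ Γ hΓ Y X (by rwa [dist_comm]) w hw
        have hm : m ≤ volume {s | s ∈ cube d 1 Y ∧
            ‖Γ.axis s - w‖ ≤ (Real.cos (ϑ/2) - Real.cos ϑ)/4} := (hpick Y).choose_spec.2
        have hswapset : E2 ∩ cubes = Prod.swap ⁻¹' (E ∩ ((cube d 1 Y) ×ˢ (cube d 1 X))) := by
          rw [Set.preimage_inter, ← hE2_def, hcubes_def, Set.preimage_swap_prod]
        have hswapvol : volume (E2 ∩ cubes) =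
            (volume.prod volume) (E ∩ ((cube d 1 Y) ×ˢ (cube d 1 X))) := by
          have hA : MeasurableSet (E ∩ ((cube d 1 Y) ×ˢ (cube d 1 X))) :=
            hE.inter ((cube_meas d Y).prod (cube_meas d X))
          rw [hswapset, hprodvol, ← Measure.map_apply measurable_swap hA, Measure.prod_swap]
        calc m * b ≤ volume {s | s ∈ cube d 1 Y ∧
                ‖Γ.axis s - w‖ ≤ (Real.cos (ϑ/2) - Real.cos ϑ)/4} * b :=
              mul_le_mul_left hm b
          _ ≤ (volume.prod volume) (E ∩ ((cube d 1 Y) ×ˢ (cube d 1 X))) := hkey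
          _ = volume (E2 ∩ cubes) := hswapvol.symm
    · -- no cone: left-hand side vanishes
      have hzero : indSum Γ' X Y = 0 := by
        rw [indSum, Set.indicator_of_notMem h1, Set.indicator_of_notMem h2, add_zero]
      rw [hzero, mul_zero, zero_mul]
      exact zero_le
end
end

section
/- Let d ≥ 1, ϑ ∈ (0, π/2], α ∈ (0,2), Λ ≥ 1, let Γ be a ϑ-admissible configuration and let k : ℝ^d × ℝ^d → [0,∞] be measurable, symmetric, and satisfy condition (A). Then there exist ϑ' ∈ (0, π/2] and C > 0, depending only on d, ϑ and Λ, such that for each h > 0 there is a configuration Γ^h on ℝ^d with the properties: (i) every cone in Γ^h(ℝ^d) has apex angle at least ϑ'; (ii) for all x, y ∈ hℤ^d with |x − y| > √d·h: C^{−1} (𝟙_{V^{Γ^h}[x]}(y) + 𝟙_{V^{Γ^h}[y]}(x)) |x−y|^{−d−α} ≤ ω^k_h(x,y) ≤ C |x−y|^{−d−α}. -/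
open MeasureTheory Metric
open scoped ENNReal

noncomputable section

lemma cube_eq_preimage (d : ℕ) (h : ℝ) (u : Euc d) :
    cube d h u = (MeasurableEquiv.toLp 2 (Fin d → ℝ)).symm ⁻¹'
      (Set.univ.pi fun i => Set.Ioo (u i - h/2) (u i + h/2)) := by
  ext x
  simp only [cube, Set.mem_preimage, Set.mem_pi, Set.mem_univ, Set.mem_Ioo, forall_true_left,
    Set.mem_setOf_eq, MeasurableEquiv.coe_toLp_symm, true_implies]
  refine forall_congr' fun i => abs_sub_lt_iff.trans ?_
  constructor <;> intro h <;> constructor <;> linarith [h.1, h.2]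

lemma measurableSet_cube (d : ℕ) (h : ℝ) (u : Euc d) : MeasurableSet (cube d h u) := by
  rw [cube_eq_preimage]
  exact (MeasurableEquiv.toLp 2 (Fin d → ℝ)).symm.measurable
    (MeasurableSet.univ_pi fun i => measurableSet_Ioo)

lemma volume_cube (d : ℕ) {h : ℝ} (hh : 0 < h) (u : Euc d) :
    volume (cube d h u) = ENNReal.ofReal h ^ d := by
  rw [cube_eq_preimage,
    (EuclideanSpace.volume_preserving_symm_measurableEquiv_toLp (Fin d)).measure_preimage
      ((MeasurableSet.univ_pi fun i => measurableSet_Ioo).nullMeasurableSet)]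
  rw [volume_pi_pi]
  have : ∀ i : Fin d, volume (Set.Ioo (u i - h/2) (u i + h/2)) = ENNReal.ofReal h := by
    intro i; rw [Real.volume_Ioo]; ring_nf
  rw [Finset.prod_congr rfl (fun i _ => this i), Finset.prod_const, Finset.card_univ,
    Fintype.card_fin]

lemma cube_subset (d : ℕ) {h h' : ℝ} (hle : h' ≤ h) (u : Euc d) :
    cube d h' u ⊆ cube d h u := fun x hx i => lt_of_lt_of_le (hx i) (by linarith)

lemma norm_le_of_mem_cube {d : ℕ} {h : ℝ} (hh : 0 ≤ h) {u x : Euc d} (hx : x ∈ cube d h u) :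
    ‖x - u‖ ≤ Real.sqrt d * (h/2) := by
  have h1 : ‖x - u‖ = Real.sqrt (∑ i, ‖(x - u) i‖^2) := EuclideanSpace.norm_eq _
  have h2 : (∑ i, ‖(x - u) i‖^2) ≤ (d : ℝ) * (h/2)^2 := by
    calc (∑ i, ‖(x - u) i‖^2) ≤ ∑ _i : Fin d, (h/2)^2 := by
          refine Finset.sum_le_sum fun i _ => ?_
          have := hx i
          have h3 : ‖(x - u) i‖ = |x i - u i| := by
            rw [PiLp.sub_apply]; exact Real.norm_eq_abs _
          rw [h3]
          nlinarith [abs_nonneg (x i - u i)]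
      _ = (d : ℝ) * (h/2)^2 := by simp [Finset.sum_const, Finset.card_univ]
  calc ‖x - u‖ ≤ Real.sqrt ((d:ℝ) * (h/2)^2) := by rw [h1]; exact Real.sqrt_le_sqrt h2
    _ = Real.sqrt d * (h/2) := by
        rw [Real.sqrt_mul (by positivity), Real.sqrt_sq (by positivity)]

def coneO {d : ℕ} (w : Euc d) (r : ℝ) : Set (Euc d) :=
  {v | ‖v - ‖v‖ • w‖ < r * ‖v‖}

lemma isOpen_coneO {d : ℕ} (w : Euc d) (r : ℝ) : IsOpen (coneO w r) := by
  have hc1 : Continuous fun v : Euc d => ‖v - ‖v‖ • w‖ :=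
    (continuous_id.sub (continuous_norm.smul continuous_const)).norm
  exact isOpen_lt hc1 (continuous_const.mul continuous_norm)

lemma ne_zero_of_mem_coneO {d : ℕ} {w : Euc d} {r : ℝ} {v : Euc d} (hv : v ∈ coneO w r) :
    v ≠ 0 := by
  rintro rfl
  simp [coneO] at hv

lemma mem_coneO_iff {d : ℕ} {w : Euc d} {r : ℝ} {v : Euc d} (hv : v ≠ 0) :
    v ∈ coneO w r ↔ ‖‖v‖⁻¹ • v - w‖ < r := by
  have hn : 0 < ‖v‖ := norm_pos_iff.mpr hv
  have h1 : v - ‖v‖ • w = ‖v‖ • (‖v‖⁻¹ • v - w) := by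
    rw [smul_sub, smul_smul, mul_inv_cancel₀ hn.ne', one_smul]
  have h2 : ‖v - ‖v‖ • w‖ = ‖v‖ * ‖‖v‖⁻¹ • v - w‖ := by
    rw [h1, norm_smul, Real.norm_eq_abs, abs_of_pos hn]
  rw [coneO, Set.mem_setOf_eq, h2, mul_comm r ‖v‖]
  exact mul_lt_mul_iff_right₀ hn

lemma strict_cone {d : ℕ} {a : Euc d} (ha : ‖a‖ = 1) {c : ℝ} (hc0 : 0 < c) (hc1 : c < 1)
    {U : Set (Euc d)} (hU : IsOpen U)
    (hg : ∀ v ∈ U, c * ‖v‖ ≤ |(inner ℝ a v : ℝ)|)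
    {v₀ : Euc d} (hv₀ : v₀ ∈ U) (h0 : v₀ ≠ 0) :
    c * ‖v₀‖ < |(inner ℝ a v₀ : ℝ)| := by
  rcases lt_or_eq_of_le (hg v₀ hv₀) with h | hEq
  · exact h
  exfalso
  obtain ⟨a', ha', hinn, hg'⟩ :
      ∃ a' : Euc d, ‖a'‖ = 1 ∧ (inner ℝ a' v₀ : ℝ) = c * ‖v₀‖ ∧
        ∀ v ∈ U, c * ‖v‖ ≤ |(inner ℝ a' v : ℝ)| := by
    rcases abs_cases (inner ℝ a v₀ : ℝ) with ⟨he, _⟩ | ⟨he, _⟩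
    · exact ⟨a, ha, by rw [← he]; exact hEq.symm, hg⟩
    · refine ⟨-a, by simpa using ha, ?_, fun v hv => ?_⟩
      · rw [inner_neg_left, ← he]; exact hEq.symm
      · rw [inner_neg_left, abs_neg]; exact hg v hv
  have hnv₀ : 0 < ‖v₀‖ := norm_pos_iff.mpr h0
  obtain ⟨r, hr0, hball⟩ := Metric.isOpen_iff.mp hU v₀ hv₀
  set ρ := min (r/2) (c * ‖v₀‖ / 2) with hρdef
  have hρ0 : 0 < ρ := lt_min (by linarith) (by positivity)
  have hkey : ∀ e : Euc d, ‖e‖ ≤ ρ → (inner ℝ a' (v₀ + e) : ℝ) = c * ‖v₀ + e‖ := by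
    have hψ : ∀ e : Euc d, ‖e‖ ≤ ρ → c * ‖v₀ + e‖ ≤ (inner ℝ a' (v₀ + e) : ℝ) := by
      intro e he
      have hmem : v₀ + e ∈ U := by
        apply hball
        rw [Metric.mem_ball, dist_eq_norm]
        simpa using lt_of_le_of_lt he (lt_of_le_of_lt (min_le_left _ _) (by linarith))
      have h1 := hg' _ hmem
      have h2 : (inner ℝ a' (v₀ + e) : ℝ) = inner ℝ a' v₀ + inner ℝ a' e := inner_add_right a' v₀ e
      have h3 : |(inner ℝ a' e : ℝ)| ≤ ‖e‖ := by
        have := abs_real_inner_le_norm a' e; rwa [ha', one_mul] at this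
      have hpos : 0 < c * ‖v₀‖ := by positivity
      have h4 : (inner ℝ a' (v₀ + e) : ℝ) > 0 := by
        rw [h2, hinn]
        have h5 : ‖e‖ ≤ c * ‖v₀‖ / 2 := le_trans he (min_le_right _ _)
        have h6 := abs_le.mp h3
        linarith [h6.1, h6.2]
      rcases abs_cases (inner ℝ a' (v₀ + e) : ℝ) with ⟨hc, _⟩ | ⟨hc, _⟩
      · rwa [hc] at h1
      · have := hc ▸ h1; linarith
    intro e he
    have he' : ‖-e‖ ≤ ρ := by rwa [norm_neg]
    have h1 := hψ e he
    have h2 := hψ (-e) he'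
    have h3 : 2 * ‖v₀‖ ≤ ‖v₀ + e‖ + ‖v₀ + -e‖ := by
      have h4 := norm_add_le (v₀ + e) (v₀ + -e)
      have h5 : v₀ + e + (v₀ + -e) = (2:ℝ) • v₀ := by module
      rw [h5, norm_smul] at h4
      simp only [Real.norm_ofNat] at h4
      linarith
    have h5 : (inner ℝ a' (v₀ + e) : ℝ) + inner ℝ a' (v₀ + -e) = 2 * (c * ‖v₀‖) := by
      have h6 : (inner ℝ a' (v₀ + e) : ℝ) + inner ℝ a' (v₀ + -e) = 2 * inner ℝ a' v₀ := by
        rw [inner_add_right, inner_add_right, inner_neg_right]; ring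
      rw [h6, hinn]
    nlinarith
  have he1 : ‖(ρ • a' : Euc d)‖ ≤ ρ := by rw [norm_smul, ha']; simp [abs_of_pos hρ0]
  have he2 : ‖(-(ρ • a') : Euc d)‖ ≤ ρ := by rwa [norm_neg]
  have hq1 := hkey _ he1
  have hq2 := hkey _ he2
  have hB : (inner ℝ a' (ρ • a') : ℝ) = ρ := by
    rw [real_inner_smul_right, real_inner_self_eq_norm_sq, ha']; ring
  have hA1 : c * ‖v₀‖ + ρ = c * ‖v₀ + ρ • a'‖ := by
    rw [← hq1, inner_add_right, hinn, hB]
  have hA2 : c * ‖v₀‖ - ρ = c * ‖v₀ + -(ρ • a')‖ := by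
    rw [← hq2, inner_add_right, hinn, inner_neg_right, hB]; ring
  have hs1 : (c * ‖v₀‖ + ρ)^2 = c^2 * ‖v₀ + ρ • a'‖^2 := by rw [hA1]; ring
  have hs2 : (c * ‖v₀‖ - ρ)^2 = c^2 * ‖v₀ + -(ρ • a')‖^2 := by rw [hA2]; ring
  have hpar : ‖v₀ + ρ • a'‖^2 + ‖v₀ + -(ρ • a')‖^2 = 2 * ‖v₀‖^2 + 2 * ρ^2 := by
    have h1 := norm_add_sq_real v₀ (ρ • a')
    have h2 := norm_sub_sq_real v₀ (ρ • a')
    have h3 : v₀ + -(ρ • a') = v₀ - ρ • a' := by module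
    have h4 : ‖(ρ • a' : Euc d)‖ = ρ := by rw [norm_smul, ha']; simp [abs_of_pos hρ0]
    rw [h3, h1, h2, h4]; ring
  have h1c : 0 < 1 - c^2 := by nlinarith
  nlinarith [hs1, hs2, hpar, mul_pos (mul_pos hρ0 hρ0) h1c]

lemma dir_close {d : ℕ} (p q : Euc d) (hp : p ≠ 0) :
    ‖‖p‖⁻¹ • p - ‖q‖⁻¹ • q‖ ≤ 2 * ‖p - q‖ / ‖p‖ := by
  have hnp : 0 < ‖p‖ := norm_pos_iff.mpr hp
  rcases eq_or_ne q 0 with rfl | hq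
  · simp only [norm_zero, inv_zero, zero_smul, sub_zero, norm_smul, Real.norm_eq_abs,
      abs_of_pos (inv_pos.mpr hnp)]
    rw [inv_mul_cancel₀ hnp.ne', mul_div_assoc, div_self hnp.ne']
    linarith
  · have hnq : 0 < ‖q‖ := norm_pos_iff.mpr hq
    have hdecomp : ‖p‖⁻¹ • p - ‖q‖⁻¹ • q =
        ‖p‖⁻¹ • (p - q) + (‖p‖⁻¹ - ‖q‖⁻¹) • q := by
      rw [smul_sub, sub_smul]; abel
    rw [hdecomp]
    have h1 : ‖(‖p‖⁻¹ • (p - q) : Euc d)‖ = ‖p - q‖ / ‖p‖ := by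
      rw [norm_smul, Real.norm_eq_abs, abs_of_pos (inv_pos.mpr hnp)]
      ring
    have h2 : ‖((‖p‖⁻¹ - ‖q‖⁻¹) • q : Euc d)‖ ≤ ‖p - q‖ / ‖p‖ := by
      have h3 : ‖p‖⁻¹ - ‖q‖⁻¹ = (‖q‖ - ‖p‖) / (‖p‖ * ‖q‖) := by field_simp
      rw [norm_smul, Real.norm_eq_abs, h3, abs_div, abs_of_pos (mul_pos hnp hnq)]
      have h4 : |‖q‖ - ‖p‖| ≤ ‖p - q‖ := by
        have h5 := abs_norm_sub_norm_le q p
        rwa [norm_sub_rev q p] at h5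
      have h6 : |‖q‖ - ‖p‖| / (‖p‖ * ‖q‖) * ‖q‖ = |‖q‖ - ‖p‖| / ‖p‖ := by
        field_simp
      rw [h6]
      exact div_le_div_of_nonneg_right h4 hnp.le |>.trans_eq rfl
    calc ‖(‖p‖⁻¹ • (p - q) : Euc d) + (‖p‖⁻¹ - ‖q‖⁻¹) • q‖
        ≤ ‖(‖p‖⁻¹ • (p - q) : Euc d)‖ + ‖((‖p‖⁻¹ - ‖q‖⁻¹) • q : Euc d)‖ := norm_add_le _ _
      _ ≤ ‖p - q‖ / ‖p‖ + ‖p - q‖ / ‖p‖ := by rw [h1]; exact add_le_add_right h2 _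
      _ = 2 * ‖p - q‖ / ‖p‖ := by ring

lemma null_hyperplane {d : ℕ} (a : Euc d) (ha : a ≠ 0) (s : Euc d) :
    volume {t : Euc d | (inner ℝ a (t - s) : ℝ) = 0} = 0 := by
  set K : Submodule ℝ (Euc d) := LinearMap.ker ((innerSL ℝ a : Euc d →L[ℝ] ℝ) : Euc d →ₗ[ℝ] ℝ) with hK
  have hKne : K ≠ ⊤ := by
    intro htop
    have : a ∈ K := htop ▸ Submodule.mem_top
    rw [hK, LinearMap.mem_ker] at this
    have h2 : (inner ℝ a a : ℝ) = 0 := this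
    rw [inner_self_eq_zero] at h2
    exact ha h2
  have h0 : volume (K : Set (Euc d)) = 0 := Measure.addHaar_submodule volume K hKne
  have heq : {t : Euc d | (inner ℝ a (t - s) : ℝ) = 0} = (fun t : Euc d => t + -s) ⁻¹' K := by
    ext t
    simp only [Set.mem_setOf_eq, Set.mem_preimage, SetLike.mem_coe, hK, LinearMap.mem_ker]
    rw [← sub_eq_add_neg]
    constructor <;> intro h <;> simpa using h
  rw [heq, measure_preimage_add_right]
  exact h0

lemma rpow_anti {a b : ℝ≥0∞} (h : a ≤ b) {e : ℝ} (he : e ≤ 0) : b ^ e ≤ a ^ e := by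
  rw [← neg_neg e, ENNReal.rpow_neg b, ENNReal.rpow_neg a]
  exact ENNReal.inv_le_inv.mpr (ENNReal.rpow_le_rpow h (by linarith))


lemma prod_lintegral_lb {d : ℕ} (k : Euc d → Euc d → ℝ≥0∞) (hk : Measurable (Function.uncurry k))
    {S T : Set (Euc d)} (hS : MeasurableSet S) (hT : MeasurableSet T) (κ : ℝ≥0∞)
    (hnull : ∀ s : Euc d, volume {t : Euc d | ((s,t) ∈ S ×ˢ T) ∧ ¬ κ ≤ k s t} = 0) :
    κ * (volume S * volume T) ≤ ∫⁻ p in S ×ˢ T, k p.1 p.2 := by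
  have hk' : Measurable fun p : Euc d × Euc d => k p.1 p.2 := hk
  have hle : MeasurableSet {p : Euc d × Euc d | κ ≤ k p.1 p.2} :=
    measurableSet_le measurable_const hk'
  set G : Set (Euc d × Euc d) := (S ×ˢ T) ∩ {p | κ ≤ k p.1 p.2} with hGdef
  set Bad : Set (Euc d × Euc d) := (S ×ˢ T) \ {p | κ ≤ k p.1 p.2} with hBdef
  have hGm : MeasurableSet G := (hS.prod hT).inter hle
  have hBm : MeasurableSet Bad := (hS.prod hT).diff hle
  have hBad0 : volume Bad = 0 := by
    rw [Measure.volume_eq_prod, Measure.prod_apply hBm]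
    have : ∀ s : Euc d, volume (Prod.mk s ⁻¹' Bad) = 0 := by
      intro s
      have hss : Prod.mk s ⁻¹' Bad = {t : Euc d | ((s,t) ∈ S ×ˢ T) ∧ ¬ κ ≤ k s t} := by
        ext t; simp [hBdef, Set.mem_preimage, Set.mem_diff]
      rw [hss]; exact hnull s
    simp only [this]
    simp
  have hcover : S ×ˢ T ⊆ G ∪ Bad := by
    intro p hp
    by_cases hκ : κ ≤ k p.1 p.2
    · exact Or.inl ⟨hp, hκ⟩
    · exact Or.inr ⟨hp, hκ⟩
  have hμG : volume S * volume T ≤ volume G := by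
    calc volume S * volume T = volume (S ×ˢ T) := by
          rw [Measure.volume_eq_prod, Measure.prod_prod]
      _ ≤ volume G + volume Bad := le_trans (measure_mono hcover) (measure_union_le _ _)
      _ = volume G := by rw [hBad0, add_zero]
  calc κ * (volume S * volume T) ≤ κ * volume G := by
        exact mul_le_mul_right hμG κ
    _ = ∫⁻ p in G, κ := (setLIntegral_const G κ).symm
    _ ≤ ∫⁻ p in G, k p.1 p.2 := setLIntegral_mono hk' (fun p hp => hp.2)
    _ ≤ ∫⁻ p in S ×ˢ T, k p.1 p.2 := lintegral_mono_set Set.inter_subset_left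

lemma prod_lintegral_lb' {d : ℕ} (k : Euc d → Euc d → ℝ≥0∞) (hk : Measurable (Function.uncurry k))
    {S T : Set (Euc d)} (hS : MeasurableSet S) (hT : MeasurableSet T) (κ : ℝ≥0∞)
    (hnull : ∀ t : Euc d, volume {s : Euc d | ((s,t) ∈ S ×ˢ T) ∧ ¬ κ ≤ k s t} = 0) :
    κ * (volume S * volume T) ≤ ∫⁻ p in S ×ˢ T, k p.1 p.2 := by
  have hk' : Measurable fun p : Euc d × Euc d => k p.1 p.2 := hk
  have hle : MeasurableSet {p : Euc d × Euc d | κ ≤ k p.1 p.2} :=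
    measurableSet_le measurable_const hk'
  set G : Set (Euc d × Euc d) := (S ×ˢ T) ∩ {p | κ ≤ k p.1 p.2} with hGdef
  set Bad : Set (Euc d × Euc d) := (S ×ˢ T) \ {p | κ ≤ k p.1 p.2} with hBdef
  have hGm : MeasurableSet G := (hS.prod hT).inter hle
  have hBm : MeasurableSet Bad := (hS.prod hT).diff hle
  have hBad0 : volume Bad = 0 := by
    rw [Measure.volume_eq_prod, Measure.prod_apply_symm hBm]
    have : ∀ t : Euc d, volume ((fun s : Euc d => (s, t)) ⁻¹' Bad) = 0 := by
      intro t
      have hss : (fun s : Euc d => (s, t)) ⁻¹' Bad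
          = {s : Euc d | ((s,t) ∈ S ×ˢ T) ∧ ¬ κ ≤ k s t} := by
        ext s; simp [hBdef, Set.mem_preimage, Set.mem_diff]
      rw [hss]; exact hnull t
    simp only [this]
    simp
  have hcover : S ×ˢ T ⊆ G ∪ Bad := by
    intro p hp
    by_cases hκ : κ ≤ k p.1 p.2
    · exact Or.inl ⟨hp, hκ⟩
    · exact Or.inr ⟨hp, hκ⟩
  have hμG : volume S * volume T ≤ volume G := by
    calc volume S * volume T = volume (S ×ˢ T) := by
          rw [Measure.volume_eq_prod, Measure.prod_prod]
      _ ≤ volume G + volume Bad := le_trans (measure_mono hcover) (measure_union_le _ _)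
      _ = volume G := by rw [hBad0, add_zero]
  calc κ * (volume S * volume T) ≤ κ * volume G := mul_le_mul_right hμG κ
    _ = ∫⁻ p in G, κ := (setLIntegral_const G κ).symm
    _ ≤ ∫⁻ p in G, k p.1 p.2 := setLIntegral_mono hk' (fun p hp => hp.2)
    _ ≤ ∫⁻ p in S ×ˢ T, k p.1 p.2 := lintegral_mono_set Set.inter_subset_left

lemma latt_gap {d : ℕ} (x y : Fin d → ℤ) {h : ℝ} (hh : 0 < h)
    (hfar : Real.sqrt d * h < dist (h • latt d x) (h • latt d y)) :
    Real.sqrt (d+1) * h ≤ dist (h • latt d x) (h • latt d y) := by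
  have hd : dist (h • latt d x) (h • latt d y) = h * dist (latt d x) (latt d y) := by
    rw [dist_smul₀, Real.norm_eq_abs, abs_of_pos hh]
  set n : ℤ := ∑ i, (x i - y i)^2 with hn
  have hn0 : (0:ℤ) ≤ n := Finset.sum_nonneg fun i _ => sq_nonneg _
  have hdist : dist (latt d x) (latt d y) = Real.sqrt ((n : ℝ)) := by
    rw [EuclideanSpace.dist_eq]
    congr 1
    rw [hn]
    push_cast
    refine Finset.sum_congr rfl fun i _ => ?_
    have : (latt d x) i = (x i : ℝ) := rfl
    have h2 : (latt d y) i = (y i : ℝ) := rfl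
    rw [this, h2, Real.dist_eq, sq_abs]
  rw [hd, hdist] at hfar ⊢
  have h2 : Real.sqrt d < Real.sqrt n := by
    by_contra hcon
    push_neg at hcon
    nlinarith [Real.sqrt_nonneg (n:ℝ), Real.sqrt_nonneg (d:ℝ)]
  have h3 : (d : ℝ) < (n : ℝ) := by
    by_contra hcon
    push_neg at hcon
    exact absurd (Real.sqrt_le_sqrt hcon) (not_le.mpr h2)
  have h4 : (d : ℤ) < n := by exact_mod_cast h3
  have h5 : ((d : ℝ) + 1) ≤ (n : ℝ) := by exact_mod_cast h4
  nlinarith [Real.sqrt_le_sqrt h5, Real.sqrt_nonneg ((d:ℝ)+1)]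

lemma sphere_net (d : ℕ) (hd : 1 ≤ d) {r : ℝ} (hr : 0 < r) :
    ∃ F : Finset (Euc d), (∀ w ∈ F, ‖w‖ = 1) ∧ F.Nonempty ∧
      ∀ a : Euc d, ‖a‖ = 1 → ∃ w ∈ F, ‖a - w‖ < r := by
  have hcov : Metric.sphere (0 : Euc d) 1 ⊆ ⋃ a ∈ Metric.sphere (0 : Euc d) 1, Metric.ball a r :=
    fun a ha => Set.mem_biUnion ha (Metric.mem_ball_self hr)
  obtain ⟨b', hb'sub, hb'fin, hb'cov⟩ :=
    (isCompact_sphere (0 : Euc d) 1).elim_finite_subcover_image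
      (fun a _ => Metric.isOpen_ball) hcov
  classical
  refine ⟨hb'fin.toFinset, ?_, ?_, ?_⟩
  · intro w hw
    have := hb'sub (hb'fin.mem_toFinset.mp hw)
    simpa [Metric.mem_sphere, dist_zero_right] using this
  · have hne : (EuclideanSpace.single (⟨0, hd⟩ : Fin d) (1:ℝ)) ∈ Metric.sphere (0 : Euc d) 1 := by
      simp [EuclideanSpace.norm_single]
    obtain ⟨w, hw, _⟩ := Set.mem_iUnion₂.mp (hb'cov hne)
    exact ⟨w, hb'fin.mem_toFinset.mpr hw⟩
  · intro a ha
    have hmem : a ∈ Metric.sphere (0 : Euc d) 1 := by simp [ha]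
    obtain ⟨w, hw, hball⟩ := Set.mem_iUnion₂.mp (hb'cov hmem)
    refine ⟨w, hb'fin.mem_toFinset.mpr hw, ?_⟩
    rwa [Metric.mem_ball, dist_eq_norm] at hball

lemma mem_doubleCone_of_inner {d : ℕ} {a : Euc d} {θ : ℝ} {v : Euc d} (hv : v ≠ 0)
    (h : Real.cos θ * ‖v‖ < |(inner ℝ a v : ℝ)|) : v ∈ doubleCone d a θ := by
  have hn : 0 < ‖v‖ := norm_pos_iff.mpr hv
  have key : Real.cos θ < |(inner ℝ a v : ℝ)| / ‖v‖ := (lt_div_iff₀ hn).mpr h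
  rcases abs_cases (inner ℝ a v : ℝ) with ⟨he, _⟩ | ⟨he, _⟩
  · exact Or.inl ⟨hv, by rwa [he] at key⟩
  · refine Or.inr ⟨neg_ne_zero.mpr hv, ?_⟩
    rw [norm_neg, inner_neg_right, ← he]
    exact key

lemma abs_inner_of_mem_doubleCone {d : ℕ} {a : Euc d} {θ : ℝ} {v : Euc d}
    (h : v ∈ doubleCone d a θ) : v ≠ 0 ∧ Real.cos θ * ‖v‖ < |(inner ℝ a v : ℝ)| := by
  simp only [doubleCone, coneSet, Set.mem_setOf_eq] at h
  rcases h with ⟨hv, hc⟩ | ⟨hv, hc⟩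
  · have hn : 0 < ‖v‖ := norm_pos_iff.mpr hv
    refine ⟨hv, lt_of_lt_of_le ((lt_div_iff₀ hn).mp hc) (le_abs_self _)⟩
  · have hv' : v ≠ 0 := fun hz => hv (by rw [hz, neg_zero])
    have hn : 0 < ‖v‖ := norm_pos_iff.mpr hv'
    rw [norm_neg, inner_neg_right] at hc
    exact ⟨hv', lt_of_lt_of_le ((lt_div_iff₀ hn).mp hc) (neg_le_abs _)⟩

lemma neg_mem_doubleCone {d : ℕ} {a : Euc d} {θ : ℝ} {v : Euc d}
    (h : v ∈ doubleCone d a θ) : -v ∈ doubleCone d a θ := by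
  rcases h with h | h
  · exact Or.inr (by rwa [neg_neg])
  · exact Or.inl h

def testSet {d : ℕ} (Γ : Config d) : Set (Euc d × Euc d) := {p | p.2 - p.1 ∈ Γ.cone p.1}

def goodSet {d : ℕ} (Γ : Config d) (ws : ℕ → Euc d) (w : Euc d) (r : ℝ) : Set (Euc d) :=
  {s | ∀ m, ws m ∈ coneO w r → (s, s + ws m) ∈ testSet Γ}

lemma measurableSet_goodSet {d : ℕ} (Γ : Config d)
    (hB : MeasurableSet (testSet Γ)) (ws : ℕ → Euc d) (w : Euc d) (r : ℝ) :
    MeasurableSet (goodSet Γ ws w r) := by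
  have heq : goodSet Γ ws w r =
      ⋂ m ∈ {m : ℕ | ws m ∈ coneO w r}, (fun s : Euc d => (s, s + ws m)) ⁻¹' testSet Γ := by
    ext s; simp [goodSet]
  rw [heq]
  exact MeasurableSet.biInter (Set.to_countable _)
    fun m _ => (measurable_id.prodMk (measurable_id.add_const _)) hB

lemma goodSet_cover {d : ℕ} (Γ : Config d) (ϑ : ℝ) (hΓb : Γ.Bounded ϑ) (hϑ0 : 0 ≤ ϑ)
    (hϑπ : ϑ ≤ Real.pi / 2) (ws : ℕ → Euc d) (r₂ r₃ : ℝ)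
    (hr₂ : 0 ≤ r₂) (hr : (r₂ + r₃)^2 ≤ 2 * (1 - Real.cos ϑ))
    (w : Euc d) (s : Euc d) (hwa : ‖Γ.axis s - w‖ ≤ r₂) :
    s ∈ goodSet Γ ws w r₃ := by
  intro m hm
  set v := ws m with hv
  have hv0 : v ≠ 0 := ne_zero_of_mem_coneO hm
  have hn : 0 < ‖v‖ := norm_pos_iff.mpr hv0
  set u : Euc d := ‖v‖⁻¹ • v with hu
  have hu1 : ‖u‖ = 1 := norm_smul_inv_norm hv0
  have hdir : ‖u - w‖ < r₃ := (mem_coneO_iff hv0).mp hm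
  set a := Γ.axis s with ha
  have ha1 : ‖a‖ = 1 := Γ.axis_norm s
  have htri : ‖u - a‖ < r₂ + r₃ := by
    calc ‖u - a‖ ≤ ‖u - w‖ + ‖a - w‖ := by
          have h0 : u - a = (u - w) - (a - w) := by abel
          rw [h0]; exact norm_sub_le _ _
      _ < r₃ + r₂ := add_lt_add_of_lt_of_le hdir hwa
      _ = r₂ + r₃ := by ring
  have hsq : ‖u - a‖^2 < 2 * (1 - Real.cos ϑ) := by
    have h1 : ‖u - a‖^2 < (r₂ + r₃)^2 := by
      have h2 : (0:ℝ) ≤ ‖u - a‖ := norm_nonneg _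
      nlinarith
    linarith
  have hinner : Real.cos ϑ < (inner ℝ a u : ℝ) := by
    have h1 := norm_sub_sq_real u a
    rw [hu1, ha1] at h1
    have h2 : (inner ℝ a u : ℝ) = inner ℝ u a := real_inner_comm u a
    nlinarith
  have hθ : Real.cos (Γ.angle s) ≤ Real.cos ϑ :=
    Real.cos_le_cos_of_nonneg_of_le_pi hϑ0
      (by linarith [(Γ.angle_mem s).2, Real.pi_pos]) (hΓb s)
  show (s + v) - s ∈ Γ.cone s
  rw [add_sub_cancel_left]
  left
  refine ⟨hv0, ?_⟩
  have h2 : (inner ℝ a v : ℝ) / ‖v‖ = inner ℝ a u := by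
    rw [hu, real_inner_smul_right]; ring
  rw [← ha, h2]
  exact lt_of_le_of_lt hθ hinner

lemma goodSet_cone {d : ℕ} (Γ : Config d)
    (ws : ℕ → Euc d) (hws : DenseRange ws)
    (w : Euc d) (r₃ : ℝ) {s : Euc d} (hs : s ∈ goodSet Γ ws w r₃)
    {v : Euc d} (hv : v ∈ coneO w r₃) :
    v ∈ Γ.cone s ∨ (inner ℝ (Γ.axis s) v : ℝ) = 0 := by
  set a := Γ.axis s with ha
  have ha1 : ‖a‖ = 1 := Γ.axis_norm s
  set θ := Γ.angle s with hθdef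
  set c := Real.cos θ with hcdef
  have hc1 : c < 1 := by
    have h1 : (0:ℝ) ∈ Set.Icc (0:ℝ) Real.pi := ⟨le_refl _, Real.pi_pos.le⟩
    have h2 : θ ∈ Set.Icc (0:ℝ) Real.pi :=
      ⟨(Γ.angle_mem s).1.le, by linarith [(Γ.angle_mem s).2, Real.pi_pos]⟩
    have h3 := Real.strictAntiOn_cos h1 h2 (Γ.angle_mem s).1
    simpa using h3
  have hc0 : 0 ≤ c := Real.cos_nonneg_of_mem_Icc ⟨by linarith [(Γ.angle_mem s).1, Real.pi_pos], (Γ.angle_mem s).2⟩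
  have hg : ∀ v' ∈ coneO w r₃, c * ‖v'‖ ≤ |(inner ℝ a v' : ℝ)| := by
    intro v' hv'
    refine le_of_forall_pos_le_add fun ε hε => ?_
    obtain ⟨δ, hδ0, hball⟩ := Metric.isOpen_iff.mp (isOpen_coneO w r₃) v' hv'
    obtain ⟨z, hzmem, hzdist⟩ := Metric.mem_closure_iff.mp (hws v') (min δ (ε/4)) (by positivity)
    obtain ⟨m, rfl⟩ := hzmem
    have hzO : ws m ∈ coneO w r₃ := hball (by
      rw [Metric.mem_ball, dist_comm]
      exact hzdist.trans_le (min_le_left _ _))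
    have hcone : ws m ∈ Γ.cone s := by
      have htest := hs m hzO
      have h0 : (s + ws m) - s = ws m := add_sub_cancel_left s (ws m)
      rw [testSet, Set.mem_setOf_eq, h0] at htest
      exact htest
    obtain ⟨hz0, hzinner⟩ := abs_inner_of_mem_doubleCone hcone
    have hdist2 : ‖v' - ws m‖ < ε/4 := by
      rw [← dist_eq_norm]
      exact hzdist.trans_le (min_le_right _ _)
    have hCS : |(inner ℝ a (v' - ws m) : ℝ)| ≤ ‖v' - ws m‖ := by
      have h1 := abs_real_inner_le_norm a (v' - ws m); rwa [ha1, one_mul] at h1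
    have hnorm : ‖v'‖ - ‖v' - ws m‖ ≤ ‖ws m‖ := by
      have h1 := norm_sub_norm_le v' (ws m)
      linarith
    have hsplit : |(inner ℝ a (ws m) : ℝ)| ≤ |(inner ℝ a v' : ℝ)| + |(inner ℝ a (v' - ws m) : ℝ)| := by
      have h1 : (inner ℝ a (ws m) : ℝ) = inner ℝ a v' - inner ℝ a (v' - ws m) := by
        rw [← inner_sub_right]; congr 1; abel
      rw [h1]
      exact abs_sub _ _
    nlinarith [norm_nonneg (v' - ws m), abs_nonneg (inner ℝ a (v' - ws m) : ℝ)]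
  rcases eq_or_lt_of_le hc0 with hceq | hcpos
  · by_cases hiz : (inner ℝ a v : ℝ) = 0
    · exact Or.inr hiz
    · left
      apply mem_doubleCone_of_inner (ne_zero_of_mem_coneO hv)
      have h0 : Real.cos θ * ‖v‖ = 0 := by rw [← hcdef, ← hceq]; ring
      rw [h0]
      exact abs_pos.mpr hiz
  · left
    exact mem_doubleCone_of_inner (ne_zero_of_mem_coneO hv)
      (strict_cone ha1 hcpos hc1 (isOpen_coneO w r₃) hg hv (ne_zero_of_mem_coneO hv))


lemma exists_good_w {d : ℕ} (F : Finset (Euc d)) (hFne : F.Nonempty)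
    (G : Euc d → Set (Euc d)) (Q : Set (Euc d))
    (hcov : ∀ s ∈ Q, ∃ w ∈ F, s ∈ G w) :
    ∃ w ∈ F, volume Q ≤ F.card * volume (G w ∩ Q) := by
  classical
  obtain ⟨w₀, hw₀, hmax⟩ := F.exists_max_image (fun w => volume (G w ∩ Q)) hFne
  refine ⟨w₀, hw₀, ?_⟩
  calc volume Q ≤ volume (⋃ w ∈ F, (G w ∩ Q)) := by
        refine measure_mono fun s hs => ?_
        obtain ⟨w, hw, hsw⟩ := hcov s hs
        exact Set.mem_biUnion hw ⟨hsw, hs⟩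
    _ ≤ ∑ w ∈ F, volume (G w ∩ Q) := measure_biUnion_finset_le F _
    _ ≤ F.card • volume (G w₀ ∩ Q) := Finset.sum_le_card_nsmul F _ _ (fun w hw => hmax w hw)
    _ = F.card * volume (G w₀ ∩ Q) := nsmul_eq_mul _ _

lemma indicator_le_one {d : ℕ} (V : Set (Euc d)) (z : Euc d) :
    V.indicator (fun _ => (1 : ℝ≥0∞)) z ≤ 1 := by
  by_cases h : z ∈ V
  · rw [Set.indicator_of_mem h]
  · rw [Set.indicator_of_notMem h]; exact zero_le

set_option maxHeartbeats 4000000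

/-- Corollary 3.6: two-sided bounds of cone type for the discretized
kernels `ω_h^k` on `hℤ^d`, uniformly in `h`. -/
theorem stmt9 (d : ℕ) (hd : 1 ≤ d) (ϑ : ℝ) (hϑ : ϑ ∈ Set.Ioc 0 (Real.pi / 2))
    (Λ : ℝ) (hΛ : 1 ≤ Λ) :
    ∃ (ϑ' C : ℝ), ϑ' ∈ Set.Ioc 0 (Real.pi / 2) ∧ 0 < C ∧
      ∀ α ∈ Set.Ioo (0 : ℝ) 2, ∀ Γ : Config d, Γ.Admissible ϑ →
        ∀ k : Euc d → Euc d → ℝ≥0∞, Measurable (Function.uncurry k) →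
          (∀ x y, k x y = k y x) →
          (∀ x y, (ENNReal.ofReal Λ)⁻¹ * indSum Γ x y * stbl d α x y ≤ k x y ∧
            k x y ≤ ENNReal.ofReal Λ * stbl d α x y) →
          ∀ h : ℝ, 0 < h →
            ∃ Γh : Config d, Γh.Bounded ϑ' ∧
              ∀ x y : Fin d → ℤ,
                Real.sqrt d * h < dist (h • latt d x) (h • latt d y) →
                  (ENNReal.ofReal C)⁻¹ * indSum Γh (h • latt d x) (h • latt d y) *
                      stbl d α (h • latt d x) (h • latt d y) ≤
                    (ENNReal.ofReal (h ^ (2 * d)))⁻¹ *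
                      ∫⁻ p in (cube d h (h • latt d x)) ×ˢ (cube d h (h • latt d y)),
                        k p.1 p.2 ∧
                  (ENNReal.ofReal (h ^ (2 * d)))⁻¹ *
                      (∫⁻ p in (cube d h (h • latt d x)) ×ˢ (cube d h (h • latt d y)),
                        k p.1 p.2) ≤
                    ENNReal.ofReal C * stbl d α (h • latt d x) (h • latt d y) := by
  classical
  have hϑ0 : 0 < ϑ := hϑ.1
  have hϑπ : ϑ ≤ Real.pi / 2 := hϑ.2
  have hΛ0 : 0 < Λ := lt_of_lt_of_le one_pos hΛ
  have hcos1 : Real.cos ϑ < 1 := by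
    have h0 : (0:ℝ) ∈ Set.Icc (0:ℝ) Real.pi := ⟨le_refl _, Real.pi_pos.le⟩
    have h1 : ϑ ∈ Set.Icc (0:ℝ) Real.pi := ⟨hϑ0.le, by linarith [Real.pi_pos]⟩
    simpa using Real.strictAntiOn_cos h0 h1 hϑ0
  have hcos0 : 0 ≤ Real.cos ϑ := Real.cos_nonneg_of_mem_Icc ⟨by linarith [Real.pi_pos], hϑπ⟩
  set ρ : ℝ := 1 - Real.cos ϑ with hρdef
  have hρ0 : 0 < ρ := by simp only [hρdef]; linarith
  have hρ1 : ρ ≤ 1 := by simp only [hρdef]; linarith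
  set r₁ : ℝ := Real.sqrt ρ / 2 with hr₁def
  have hr₁0 : 0 < r₁ := by
    have := Real.sqrt_pos.mpr hρ0
    simp only [hr₁def]; linarith
  have hr₁sq : r₁^2 = ρ/4 := by
    simp only [hr₁def, div_pow, Real.sq_sqrt hρ0.le]; norm_num
  have hr₁le : r₁ ≤ 1/2 := by
    have h1 : Real.sqrt ρ ≤ 1 := by
      nlinarith [Real.sq_sqrt hρ0.le, Real.sqrt_nonneg ρ]
    simp only [hr₁def]; linarith
  set r₂ : ℝ := r₁/4 with hr₂def
  set r₃ : ℝ := r₁/2 with hr₃def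
  set r₄ : ℝ := r₁/4 with hr₄def
  set δ : ℝ := r₁/32 with hδdef
  have hδ0 : 0 < δ := by simp only [hδdef]; linarith
  have hδ1 : δ ≤ 1 := by simp only [hδdef]; linarith only [hr₁0, hr₁le]
  have hδhalf : δ ≤ 1/2 := by simp only [hδdef]; linarith only [hr₁0, hr₁le]
  obtain ⟨F, hFunit, hFne, hFnet⟩ := sphere_net d hd (show (0:ℝ) < r₂ by simp only [hr₂def]; linarith)
  set N : ℕ := F.card with hNdef
  have hN0 : 0 < N := Finset.card_pos.mpr hFne
  set ϑ' : ℝ := Real.arccos (1 - r₄^2/2) with hϑ'def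
  have hr₄0 : 0 < r₄ := by simp only [hr₄def]; linarith
  have hr₄le : r₄ ≤ 1 := by simp only [hr₄def]; linarith
  have hϑ'mem : ϑ' ∈ Set.Ioc 0 (Real.pi/2) := by
    constructor
    · exact Real.arccos_pos.mpr (by nlinarith)
    · exact Real.arccos_le_pi_div_two.mpr (by nlinarith)
  have hcosϑ' : Real.cos ϑ' = 1 - r₄^2/2 := Real.cos_arccos (by nlinarith) (by nlinarith)
  set cd : ℝ := 1 - Real.sqrt ((d:ℝ)/(d+1)) with hcddef
  have hfrac : (0:ℝ) ≤ (d:ℝ)/(d+1) := by positivity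
  have hfrac1 : (d:ℝ)/(d+1) < 1 := by
    rw [div_lt_one (by positivity)]; linarith
  have hcd0 : 0 < cd := by
    have h1 : Real.sqrt ((d:ℝ)/(d+1)) < 1 := by
      nlinarith [Real.sq_sqrt hfrac, Real.sqrt_nonneg ((d:ℝ)/(d+1))]
    simp only [hcddef]; linarith
  have hcd1 : cd ≤ 1 := by
    have := Real.sqrt_nonneg ((d:ℝ)/(d+1))
    simp only [hcddef]; linarith
  set C₁ : ℝ := Λ * (cd^(d+2))⁻¹ with hC₁def
  set C₂ : ℝ := 2 * (Λ * 2^(d+2) * N * (δ^(2*d))⁻¹) with hC₂def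
  have hNR : (0:ℝ) < N := by exact_mod_cast hN0
  have hC₁0 : 0 < C₁ := by positivity
  have hC₂0 : 0 < C₂ := by
    have h1 : (0:ℝ) < δ^(2*d) := by positivity
    have h2 : (0:ℝ) < (2:ℝ)^(d+2) := by positivity
    simp only [hC₂def]
    exact mul_pos two_pos (mul_pos (mul_pos (mul_pos hΛ0 h2) hNR) (inv_pos.mpr h1))
  set C : ℝ := max C₁ C₂ with hCdef
  have hC0 : 0 < C := lt_of_lt_of_le hC₁0 (le_max_left _ _)
  refine ⟨ϑ', C, hϑ'mem, hC0, ?_⟩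
  intro α hα Γ hΓ k hkmeas hksymm hkA h hh
  obtain ⟨hΓb, hΓB⟩ := hΓ
  have hk2 : Measurable fun p : Euc d × Euc d => k p.1 p.2 := hkmeas
  obtain ⟨ws, hws⟩ := TopologicalSpace.exists_dense_seq (Euc d)
  have hGmeas : ∀ w : Euc d, MeasurableSet (goodSet Γ ws w r₃) :=
    fun w => measurableSet_goodSet Γ hΓB ws w r₃
  have hGcov : ∀ s : Euc d, ∃ w ∈ F, s ∈ goodSet Γ ws w r₃ := by
    intro s
    obtain ⟨w, hwF, hwa⟩ := hFnet (Γ.axis s) (Γ.axis_norm s)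
    have hnetr : (r₂ + r₃)^2 ≤ 2*ρ := by
      simp only [hr₂def, hr₄def, hr₃def]
      nlinarith only [hr₁sq, hρ0, hr₁0]
    refine ⟨w, hwF, goodSet_cover Γ ϑ hΓb hϑ0.le hϑπ ws r₂ r₃
      (by simp only [hr₂def, hr₄def]; linarith only [hr₁0]) hnetr w s hwa.le⟩
  have hδh : 0 < δ * h := by positivity
  have hsel : ∀ X : Euc d, ∃ w, w ∈ F ∧
      volume (cube d (δ*h) X) ≤ N * volume (goodSet Γ ws w r₃ ∩ cube d (δ*h) X) := by
    intro X
    obtain ⟨w, hwF, hwvol⟩ := exists_good_w F hFne (fun w => goodSet Γ ws w r₃)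
      (cube d (δ*h) X) (fun s _ => hGcov s)
    exact ⟨w, hwF, hwvol⟩
  choose wsel hwselF hwselvol using hsel
  refine ⟨⟨fun X => wsel X, fun _ => ϑ', fun X => hFunit _ (hwselF X), fun _ => hϑ'mem⟩,
    fun X => le_refl _, ?_⟩
  intro x y hfar
  set Γh : Config d := ⟨fun X => wsel X, fun _ => ϑ', fun X => hFunit _ (hwselF X),
    fun _ => hϑ'mem⟩ with hΓhdef
  set X : Euc d := h • latt d x with hXdef
  set Y : Euc d := h • latt d y with hYdef
  set D : ℝ := dist X Y with hDdef
  have hD1 : Real.sqrt (d+1) * h ≤ D := latt_gap x y hh hfar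
  have hsd1 : 1 ≤ Real.sqrt d := by
    nlinarith [Real.sq_sqrt (by positivity : (0:ℝ) ≤ (d:ℝ)), Real.sqrt_nonneg (d:ℝ),
      (by exact_mod_cast hd : (1:ℝ) ≤ (d:ℝ))]
  have hD0 : 0 < D := lt_of_le_of_lt (by positivity : (0:ℝ) ≤ Real.sqrt d * h) hfar
  have hα0 : 0 < α := hα.1
  have hα2 : α < 2 := hα.2
  set e : ℝ := -(d:ℝ) - α with hedef
  have he0 : e ≤ 0 := by simp only [hedef]; push_cast; linarith
  have he2 : -((d:ℝ)+2) ≤ e := by simp only [hedef]; push_cast; linarith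
  -- upper bound
  have hcubes_dist : ∀ s ∈ cube d h X, ∀ t ∈ cube d h Y, cd * D ≤ dist s t := by
    intro s hs t ht
    have h1 : ‖s - X‖ ≤ Real.sqrt d * (h/2) := norm_le_of_mem_cube hh.le hs
    have h2 : ‖t - Y‖ ≤ Real.sqrt d * (h/2) := norm_le_of_mem_cube hh.le ht
    have h3 : D ≤ dist X s + dist s t + dist t Y := dist_triangle4 X s t Y
    have h4 : dist X s = ‖s - X‖ := by rw [dist_comm, dist_eq_norm]
    have h5 : dist t Y = ‖t - Y‖ := dist_eq_norm t Y
    have h6 : Real.sqrt d * h ≤ Real.sqrt ((d:ℝ)/(d+1)) * D := by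
      have h7 : Real.sqrt ((d:ℝ)/(d+1)) * Real.sqrt ((d:ℝ)+1) = Real.sqrt d := by
        rw [← Real.sqrt_mul hfrac]
        congr 1
        field_simp
      have h8 : Real.sqrt ((d:ℝ)/(d+1)) * (Real.sqrt ((d:ℝ)+1) * h) ≤ Real.sqrt ((d:ℝ)/(d+1)) * D :=
        mul_le_mul_of_nonneg_left hD1 (Real.sqrt_nonneg _)
      calc Real.sqrt d * h = Real.sqrt ((d:ℝ)/(d+1)) * (Real.sqrt ((d:ℝ)+1) * h) := by
            rw [← mul_assoc, h7]
        _ ≤ _ := h8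
    have h9 : cd * D = D - Real.sqrt ((d:ℝ)/(d+1)) * D := by
      simp only [hcddef]; ring
    rw [h9]
    rw [h4] at h3
    rw [h5] at h3
    linarith only [h1, h2, h3, h6]
  have hUB : (ENNReal.ofReal (h ^ (2*d)))⁻¹ *
      (∫⁻ p in (cube d h X) ×ˢ (cube d h Y), k p.1 p.2) ≤ ENNReal.ofReal C * stbl d α X Y := by
    have hstblbd : ∀ p : Euc d × Euc d, p ∈ (cube d h X) ×ˢ (cube d h Y) →
        k p.1 p.2 ≤ ENNReal.ofReal Λ * ENNReal.ofReal (cd * D) ^ e := by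
      intro p hp
      refine le_trans (hkA p.1 p.2).2 (mul_le_mul_right ?_ _)
      have h1 : stbl d α p.1 p.2 = ENNReal.ofReal (dist p.1 p.2) ^ e := rfl
      rw [h1]
      exact rpow_anti (ENNReal.ofReal_le_ofReal (hcubes_dist p.1 hp.1 p.2 hp.2)) he0
    have hvol2 : volume ((cube d h X) ×ˢ (cube d h Y)) = ENNReal.ofReal (h^(2*d)) := by
      rw [Measure.volume_eq_prod, Measure.prod_prod, volume_cube d hh, volume_cube d hh,
        ← pow_add, ENNReal.ofReal_pow hh.le, two_mul]
    have hint : (∫⁻ p in (cube d h X) ×ˢ (cube d h Y), k p.1 p.2)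
        ≤ ENNReal.ofReal Λ * ENNReal.ofReal (cd * D) ^ e * ENNReal.ofReal (h^(2*d)) := by
      calc (∫⁻ p in (cube d h X) ×ˢ (cube d h Y), k p.1 p.2)
          ≤ ∫⁻ _p in (cube d h X) ×ˢ (cube d h Y),
              ENNReal.ofReal Λ * ENNReal.ofReal (cd * D) ^ e :=
            setLIntegral_mono measurable_const hstblbd
        _ = ENNReal.ofReal Λ * ENNReal.ofReal (cd * D) ^ e *
              volume ((cube d h X) ×ˢ (cube d h Y)) :=
            setLIntegral_const _ _
        _ = _ := by rw [hvol2]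
    have hA0 : ENNReal.ofReal (h^(2*d)) ≠ 0 :=
      (ENNReal.ofReal_pos.mpr (by positivity)).ne'
    have hAt : ENNReal.ofReal (h^(2*d)) ≠ ⊤ := ENNReal.ofReal_ne_top
    have hmain : (ENNReal.ofReal (h ^ (2*d)))⁻¹ *
        (∫⁻ p in (cube d h X) ×ˢ (cube d h Y), k p.1 p.2)
        ≤ ENNReal.ofReal Λ * ENNReal.ofReal (cd*D)^e := by
      calc (ENNReal.ofReal (h ^ (2*d)))⁻¹ *
          (∫⁻ p in (cube d h X) ×ˢ (cube d h Y), k p.1 p.2)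
          ≤ (ENNReal.ofReal (h ^ (2*d)))⁻¹ *
            (ENNReal.ofReal Λ * ENNReal.ofReal (cd * D) ^ e * ENNReal.ofReal (h^(2*d))) :=
            mul_le_mul_right hint _
        _ = ENNReal.ofReal Λ * ENNReal.ofReal (cd*D)^e := by
            rw [mul_comm (ENNReal.ofReal Λ * ENNReal.ofReal (cd * D) ^ e) _, ← mul_assoc,
              ENNReal.inv_mul_cancel hA0 hAt, one_mul]
    have hconst : ENNReal.ofReal Λ * ENNReal.ofReal (cd * D) ^ e
        ≤ ENNReal.ofReal C * stbl d α X Y := by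
      have h1 : ENNReal.ofReal (cd * D) ^ e = ENNReal.ofReal cd ^ e * ENNReal.ofReal D ^ e := by
        rw [ENNReal.ofReal_mul hcd0.le]
        exact ENNReal.mul_rpow_of_ne_zero (ENNReal.ofReal_pos.mpr hcd0).ne'
          (ENNReal.ofReal_pos.mpr hD0).ne' e
      have h2 : ENNReal.ofReal cd ^ e ≤ ENNReal.ofReal ((cd^(d+2))⁻¹) := by
        have h3 : ENNReal.ofReal cd ^ e ≤ ENNReal.ofReal cd ^ (-((d:ℝ)+2)) :=
          ENNReal.rpow_le_rpow_of_exponent_ge (ENNReal.ofReal_le_one.mpr hcd1) he2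
        have h4 : ENNReal.ofReal cd ^ (-((d:ℝ)+2)) = ENNReal.ofReal ((cd^(d+2))⁻¹) := by
          rw [ENNReal.ofReal_rpow_of_pos hcd0]
          congr 1
          rw [Real.rpow_neg hcd0.le]
          congr 1
          rw [show ((d:ℝ)+2) = ((d+2 : ℕ) : ℝ) by push_cast; ring, Real.rpow_natCast]
        rw [← h4]; exact h3
      have hstX : stbl d α X Y = ENNReal.ofReal D ^ e := rfl
      rw [hstX, h1, ← mul_assoc]
      refine mul_le_mul_left ?_ _
      calc ENNReal.ofReal Λ * ENNReal.ofReal cd ^ e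
          ≤ ENNReal.ofReal Λ * ENNReal.ofReal ((cd^(d+2))⁻¹) := mul_le_mul_right h2 _
        _ = ENNReal.ofReal C₁ := by rw [← ENNReal.ofReal_mul hΛ0.le]
        _ ≤ ENNReal.ofReal C := ENNReal.ofReal_le_ofReal (le_max_left _ _)
    exact le_trans hmain hconst
  refine ⟨?_, hUB⟩
  rcases eq_or_ne (indSum Γh X Y) 0 with hzero | hne
  · rw [hzero, mul_zero, zero_mul]
    exact zero_le
  have hmem : Y - X ∈ Γh.cone X ∨ X - Y ∈ Γh.cone Y := by
    by_contra hcon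
    push_neg at hcon
    apply hne
    simp only [indSum]
    rw [Set.indicator_of_notMem hcon.1, Set.indicator_of_notMem hcon.2, add_zero]
  set κ : ℝ≥0∞ := ENNReal.ofReal Λ⁻¹ * ENNReal.ofReal (2*D) ^ e with hκdef
  have hκle : ∀ s t : Euc d, dist s t ≤ 2*D →
      (t - s ∈ Γ.cone s ∨ s - t ∈ Γ.cone t) → κ ≤ k s t := by
    intro s t hdst hm
    have hind1 : (1:ℝ≥0∞) ≤ indSum Γ s t := by
      rcases hm with hm | hm
      · simp only [indSum]
        calc (1:ℝ≥0∞) = (Γ.cone s).indicator (fun _ => 1) (t - s) :=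
              (Set.indicator_of_mem hm (fun _ => (1:ℝ≥0∞))).symm
          _ ≤ _ := self_le_add_right _ _
      · simp only [indSum]
        calc (1:ℝ≥0∞) = (Γ.cone t).indicator (fun _ => 1) (s - t) :=
              (Set.indicator_of_mem hm (fun _ => (1:ℝ≥0∞))).symm
          _ ≤ _ := self_le_add_left _ _
    have hst : ENNReal.ofReal (2*D) ^ e ≤ stbl d α s t := by
      have h1 : stbl d α s t = ENNReal.ofReal (dist s t) ^ e := rfl
      rw [h1]
      exact rpow_anti (ENNReal.ofReal_le_ofReal hdst) he0
    calc κ = (ENNReal.ofReal Λ)⁻¹ * 1 * (ENNReal.ofReal (2*D) ^ e) := by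
          rw [hκdef, ENNReal.ofReal_inv_of_pos hΛ0, mul_one]
      _ ≤ (ENNReal.ofReal Λ)⁻¹ * indSum Γ s t * stbl d α s t :=
          mul_le_mul' (mul_le_mul_right hind1 _) hst
      _ ≤ k s t := (hkA s t).1
  have hdirq : ∀ s ∈ cube d (δ*h) X, ∀ t ∈ cube d (δ*h) Y,
      dist s t ≤ 2*D ∧ (t - s) ≠ 0 ∧
      ‖‖t-s‖⁻¹ • (t-s) - ‖Y-X‖⁻¹ • (Y-X)‖ ≤ r₁/8 := by
    intro s hs t ht
    have h1 : ‖s - X‖ ≤ Real.sqrt d * ((δ*h)/2) := norm_le_of_mem_cube hδh.le hs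
    have h2 : ‖t - Y‖ ≤ Real.sqrt d * ((δ*h)/2) := norm_le_of_mem_cube hδh.le ht
    have hnq : ‖Y - X‖ = D := by rw [← dist_eq_norm, dist_comm]
    have hpq : ‖(t - s) - (Y - X)‖ ≤ Real.sqrt d * (δ*h) := by
      have h3 : (t - s) - (Y - X) = (t - Y) - (s - X) := by abel
      rw [h3]
      calc ‖(t - Y) - (s - X)‖ ≤ ‖t - Y‖ + ‖s - X‖ := norm_sub_le _ _
        _ ≤ _ := by linarith only [h1, h2]
    have hsdh : Real.sqrt d * (δ*h) ≤ δ * D := by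
      have h4 : Real.sqrt d * (δ*h) = δ * (Real.sqrt d * h) := by ring
      rw [h4]
      exact mul_le_mul_of_nonneg_left hfar.le hδ0.le
    have hδD2 : δ * D ≤ D/2 := by
      have h12 := mul_le_mul_of_nonneg_right hδhalf hD0.le
      linarith only [h12]
    have hnp : D/2 ≤ ‖t - s‖ := by
      have h5 : ‖Y - X‖ ≤ ‖t - s‖ + ‖(t - s) - (Y - X)‖ := by
        calc ‖Y - X‖ = ‖(t - s) - ((t - s) - (Y - X))‖ := by congr 1; abel
          _ ≤ ‖t - s‖ + ‖(t - s) - (Y - X)‖ := norm_sub_le _ _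
      rw [hnq] at h5
      linarith only [h5, hpq, hsdh, hδD2]
    have hp0 : (t - s) ≠ 0 := by
      intro h0
      rw [h0, norm_zero] at hnp
      linarith only [hnp, hD0]
    refine ⟨?_, hp0, ?_⟩
    · have h6 : ‖t - s‖ ≤ ‖Y - X‖ + ‖(t - s) - (Y - X)‖ := by
        calc ‖t - s‖ = ‖(Y - X) + ((t - s) - (Y - X))‖ := by congr 1; abel
          _ ≤ _ := norm_add_le _ _
      have h7 : dist s t = ‖t - s‖ := by rw [dist_eq_norm, norm_sub_rev]
      rw [hnq] at h6
      rw [h7]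
      linarith only [h6, hpq, hsdh, hδD2, hD0]
    · have h8 := dir_close (t - s) (Y - X) hp0
      have h9 : 2 * ‖(t - s) - (Y - X)‖ / ‖t - s‖ ≤ r₁/8 := by
        have h10 : ‖(t - s) - (Y - X)‖ ≤ δ * D := le_trans hpq hsdh
        have h11 : 0 < ‖t - s‖ := lt_of_lt_of_le (by linarith only [hD0]) hnp
        rw [div_le_iff₀ h11]
        have h12 : r₁/8 * (D/2) ≤ r₁/8 * ‖t - s‖ :=
          mul_le_mul_of_nonneg_left hnp (by linarith)
        have h13 : 2 * (δ * D) = r₁/8 * (D/2) := by simp only [hδdef]; ring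
        linarith only [h10, h12, h13]
      exact le_trans h8 h9
  have hchord : ∀ w z : Euc d, ‖w‖ = 1 → z ∈ doubleCone d w ϑ' →
      z ≠ 0 ∧ (‖‖z‖⁻¹ • z - w‖ < r₄ ∨ ‖‖z‖⁻¹ • z + w‖ < r₄) := by
    intro w z hw hz
    simp only [doubleCone, coneSet, Set.mem_setOf_eq] at hz
    rcases hz with ⟨hz0, hc⟩ | ⟨hz0, hc⟩
    · have hn : 0 < ‖z‖ := norm_pos_iff.mpr hz0
      have hu1 : ‖‖z‖⁻¹ • z‖ = 1 := norm_smul_inv_norm hz0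
      have hiu : (inner ℝ w (‖z‖⁻¹ • z) : ℝ) = (inner ℝ w z : ℝ) / ‖z‖ := by
        rw [real_inner_smul_right]; ring
      have hgt : 1 - r₄^2/2 < (inner ℝ w (‖z‖⁻¹ • z) : ℝ) := by
        rw [hiu, ← hcosϑ']; exact hc
      refine ⟨hz0, Or.inl ?_⟩
      have hsq := norm_sub_sq_real (‖z‖⁻¹ • z) w
      rw [hu1, hw] at hsq
      have hcomm : (inner ℝ (‖z‖⁻¹ • z) w : ℝ) = inner ℝ w (‖z‖⁻¹ • z) := real_inner_comm _ _
      nlinarith only [hsq, hcomm, hgt, norm_nonneg (‖z‖⁻¹ • z - w), hr₄0]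
    · have hz0' : z ≠ 0 := fun h0 => hz0 (by rw [h0, neg_zero])
      have hn : 0 < ‖z‖ := norm_pos_iff.mpr hz0'
      have hu1 : ‖‖z‖⁻¹ • z‖ = 1 := norm_smul_inv_norm hz0'
      have hiu : (inner ℝ w (-z) : ℝ) / ‖-z‖ = -(inner ℝ w (‖z‖⁻¹ • z) : ℝ) := by
        rw [inner_neg_right, norm_neg, real_inner_smul_right]
        field_simp
      rw [hiu] at hc
      have hgt : 1 - r₄^2/2 < -(inner ℝ w (‖z‖⁻¹ • z) : ℝ) := by
        rw [← hcosϑ']; exact hc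
      refine ⟨hz0', Or.inr ?_⟩
      have hsq := norm_add_sq_real (‖z‖⁻¹ • z) w
      rw [hu1, hw] at hsq
      have hcomm : (inner ℝ (‖z‖⁻¹ • z) w : ℝ) = inner ℝ w (‖z‖⁻¹ • z) := real_inner_comm _ _
      nlinarith only [hsq, hcomm, hgt, norm_nonneg (‖z‖⁻¹ • z + w), hr₄0]
  have hr₃sum : r₁/8 + r₄ < r₃ := by
    simp only [hr₃def, hr₄def]; linarith
  have hNne : (N:ℝ≥0∞) ≠ 0 := Nat.cast_ne_zero.mpr hN0.ne'
  have hNtop : (N:ℝ≥0∞) ≠ ⊤ := ENNReal.natCast_ne_top N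
  set Vlow : ℝ≥0∞ := ENNReal.ofReal (δ*h) ^ d * (ENNReal.ofReal (δ*h) ^ d * ((N:ℝ≥0∞))⁻¹)
    with hVlowdef
  have hcsub : δ * h ≤ h := by
    have h12 := mul_le_mul_of_nonneg_right hδ1 hh.le
    linarith only [h12]
  have hIlow : κ * Vlow ≤ ∫⁻ p in (cube d h X) ×ˢ (cube d h Y), k p.1 p.2 := by
    rcases hmem with hm1 | hm1
    · -- case 1 : cone at X
      have hw1 : ‖wsel X‖ = 1 := hFunit _ (hwselF X)
      have hcone : Y - X ∈ doubleCone d (wsel X) ϑ' := hm1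
      obtain ⟨hq0, hqdir⟩ := hchord (wsel X) (Y - X) hw1 hcone
      set w := wsel X with hwdef
      set S := goodSet Γ ws w r₃ ∩ cube d (δ*h) X with hSdef
      set T := cube d (δ*h) Y with hTdef
      have hSm : MeasurableSet S := (hGmeas w).inter (measurableSet_cube _ _ _)
      have hTm : MeasurableSet T := measurableSet_cube _ _ _
      have hnull : ∀ s : Euc d, volume {t : Euc d | ((s,t) ∈ S ×ˢ T) ∧ ¬ κ ≤ k s t} = 0 := by
        intro s
        by_cases hsS : s ∈ S
        · have haxis : ‖Γ.axis s‖ = 1 := Γ.axis_norm s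
          have hax0 : Γ.axis s ≠ 0 := by
            intro h0; rw [h0, norm_zero] at haxis; norm_num at haxis
          refine measure_mono_null ?_ (null_hyperplane (Γ.axis s) hax0 s)
          rintro t ⟨⟨_, htT⟩, hnk⟩
          obtain ⟨hdst, hp0, hdev⟩ := hdirq s hsS.2 t htT
          have hO : (t - s) ∈ coneO w r₃ ∨ -(t - s) ∈ coneO w r₃ := by
            rcases hqdir with hq | hq
            · left
              rw [mem_coneO_iff hp0]
              have hE : ‖t-s‖⁻¹ • (t-s) - w =
                  (‖t-s‖⁻¹ • (t-s) - ‖Y-X‖⁻¹ • (Y-X)) + (‖Y-X‖⁻¹ • (Y-X) - w) := by abel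
              calc ‖‖t-s‖⁻¹ • (t-s) - w‖
                  ≤ ‖‖t-s‖⁻¹ • (t-s) - ‖Y-X‖⁻¹ • (Y-X)‖ + ‖‖Y-X‖⁻¹ • (Y-X) - w‖ := by
                    rw [hE]; exact norm_add_le _ _
                _ < r₃ := by linarith only [hdev, hq, hr₃sum]
            · right
              have hneg0 : -(t - s) ≠ 0 := neg_ne_zero.mpr hp0
              rw [mem_coneO_iff hneg0]
              have hE0 : ‖-(t-s)‖⁻¹ • (-(t-s)) - w = -(‖t-s‖⁻¹ • (t-s) + w) := by
                rw [norm_neg, smul_neg]; abel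
              rw [hE0, norm_neg]
              have hE : ‖t-s‖⁻¹ • (t-s) + w =
                  (‖t-s‖⁻¹ • (t-s) - ‖Y-X‖⁻¹ • (Y-X)) + (‖Y-X‖⁻¹ • (Y-X) + w) := by abel
              calc ‖‖t-s‖⁻¹ • (t-s) + w‖
                  ≤ ‖‖t-s‖⁻¹ • (t-s) - ‖Y-X‖⁻¹ • (Y-X)‖ + ‖‖Y-X‖⁻¹ • (Y-X) + w‖ := by
                    rw [hE]; exact norm_add_le _ _
                _ < r₃ := by linarith only [hdev, hq, hr₃sum]
          have hGC : (t - s) ∈ Γ.cone s ∨ (inner ℝ (Γ.axis s) (t - s) : ℝ) = 0 := by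
            rcases hO with hO | hO
            · exact goodSet_cone Γ ws hws w r₃ hsS.1 hO
            · rcases goodSet_cone Γ ws hws w r₃ hsS.1 hO with hcc | hcc
              · left
                have h0 := neg_mem_doubleCone hcc
                rwa [neg_neg] at h0
              · right
                rw [inner_neg_right] at hcc
                linarith only [hcc]
          rcases hGC with hcc | hcc
          · exact absurd (hκle s t hdst (Or.inl hcc)) hnk
          · exact hcc
        · have hempty : {t : Euc d | ((s,t) ∈ S ×ˢ T) ∧ ¬ κ ≤ k s t} = ∅ := by
            ext t
            constructor
            · rintro ⟨⟨h1, _⟩, _⟩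
              exact absurd h1 hsS
            · intro ht
              exact absurd ht (Set.notMem_empty t)
          rw [hempty]; exact measure_empty
      have hlb := prod_lintegral_lb k hkmeas hSm hTm κ hnull
      have hvolT : volume T = ENNReal.ofReal (δ*h) ^ d := volume_cube d hδh Y
      have hvS : ENNReal.ofReal (δ*h) ^ d * ((N:ℝ≥0∞))⁻¹ ≤ volume S := by
        have h1 : volume (cube d (δ*h) X) ≤ N * volume S := hwselvol X
        rw [volume_cube d hδh] at h1
        calc ENNReal.ofReal (δ*h) ^ d * ((N:ℝ≥0∞))⁻¹
            ≤ ((N:ℝ≥0∞) * volume S) * ((N:ℝ≥0∞))⁻¹ := mul_le_mul_left h1 _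
          _ = volume S := by
              rw [mul_comm (N:ℝ≥0∞) _, mul_assoc, ENNReal.mul_inv_cancel hNne hNtop, mul_one]
      have hVST : Vlow ≤ volume S * volume T := by
        rw [hVlowdef, hvolT]
        calc ENNReal.ofReal (δ*h) ^ d * (ENNReal.ofReal (δ*h) ^ d * ((N:ℝ≥0∞))⁻¹)
            = (ENNReal.ofReal (δ*h) ^ d * ((N:ℝ≥0∞))⁻¹) * ENNReal.ofReal (δ*h) ^ d := by ring
          _ ≤ volume S * ENNReal.ofReal (δ*h) ^ d := mul_le_mul_left hvS _
      have hsub : S ×ˢ T ⊆ (cube d h X) ×ˢ (cube d h Y) :=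
        Set.prod_mono (Set.inter_subset_right.trans (cube_subset d hcsub X))
          (cube_subset d hcsub Y)
      calc κ * Vlow ≤ κ * (volume S * volume T) := mul_le_mul_right hVST _
        _ ≤ ∫⁻ p in S ×ˢ T, k p.1 p.2 := hlb
        _ ≤ _ := lintegral_mono_set hsub
    · -- case 2 : cone at Y
      have hw1 : ‖wsel Y‖ = 1 := hFunit _ (hwselF Y)
      have hcone : X - Y ∈ doubleCone d (wsel Y) ϑ' := hm1
      obtain ⟨hq0, hqdir0⟩ := hchord (wsel Y) (X - Y) hw1 hcone
      set w := wsel Y with hwdef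
      -- translate to direction of Y - X
      have hq0' : Y - X ≠ 0 := by
        intro h0
        apply hq0
        have : X - Y = -(Y - X) := by abel
        rw [this, h0, neg_zero]
      have hXYneg : X - Y = -(Y - X) := by abel
      have hdirneg : ‖X-Y‖⁻¹ • (X-Y) = -(‖Y-X‖⁻¹ • (Y-X)) := by
        rw [hXYneg, norm_neg, smul_neg]
      have hqdir : ‖‖Y-X‖⁻¹ • (Y-X) + w‖ < r₄ ∨ ‖‖Y-X‖⁻¹ • (Y-X) - w‖ < r₄ := by
        rcases hqdir0 with hq | hq
        · left
          rw [hdirneg] at hq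
          have h0 : -(‖Y-X‖⁻¹ • (Y-X)) - w = -((‖Y-X‖⁻¹ • (Y-X)) + w) := by abel
          rwa [h0, norm_neg] at hq
        · right
          rw [hdirneg] at hq
          have h0 : -(‖Y-X‖⁻¹ • (Y-X)) + w = -((‖Y-X‖⁻¹ • (Y-X)) - w) := by abel
          rwa [h0, norm_neg] at hq
      set S := cube d (δ*h) X with hSdef
      set T := goodSet Γ ws w r₃ ∩ cube d (δ*h) Y with hTdef
      have hSm : MeasurableSet S := measurableSet_cube _ _ _
      have hTm : MeasurableSet T := (hGmeas w).inter (measurableSet_cube _ _ _)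
      have hnull : ∀ t : Euc d, volume {s : Euc d | ((s,t) ∈ S ×ˢ T) ∧ ¬ κ ≤ k s t} = 0 := by
        intro t
        by_cases htT : t ∈ T
        · have haxis : ‖Γ.axis t‖ = 1 := Γ.axis_norm t
          have hax0 : Γ.axis t ≠ 0 := by
            intro h0; rw [h0, norm_zero] at haxis; norm_num at haxis
          refine measure_mono_null ?_ (null_hyperplane (Γ.axis t) hax0 t)
          rintro s ⟨⟨hsS, _⟩, hnk⟩
          obtain ⟨hdst, hp0, hdev⟩ := hdirq s hsS t htT.2
          have hO : (s - t) ∈ coneO w r₃ ∨ -(s - t) ∈ coneO w r₃ := by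
            have hst : s - t = -(t - s) := by abel
            rcases hqdir with hq | hq
            · left
              rw [hst]
              have hneg0 : -(t - s) ≠ 0 := neg_ne_zero.mpr hp0
              rw [mem_coneO_iff hneg0]
              have hE0 : ‖-(t-s)‖⁻¹ • (-(t-s)) - w = -(‖t-s‖⁻¹ • (t-s) + w) := by
                rw [norm_neg, smul_neg]; abel
              rw [hE0, norm_neg]
              have hE : ‖t-s‖⁻¹ • (t-s) + w =
                  (‖t-s‖⁻¹ • (t-s) - ‖Y-X‖⁻¹ • (Y-X)) + (‖Y-X‖⁻¹ • (Y-X) + w) := by abel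
              calc ‖‖t-s‖⁻¹ • (t-s) + w‖
                  ≤ ‖‖t-s‖⁻¹ • (t-s) - ‖Y-X‖⁻¹ • (Y-X)‖ + ‖‖Y-X‖⁻¹ • (Y-X) + w‖ := by
                    rw [hE]; exact norm_add_le _ _
                _ < r₃ := by linarith only [hdev, hq, hr₃sum]
            · right
              rw [hst, neg_neg, mem_coneO_iff hp0]
              have hE : ‖t-s‖⁻¹ • (t-s) - w =
                  (‖t-s‖⁻¹ • (t-s) - ‖Y-X‖⁻¹ • (Y-X)) + (‖Y-X‖⁻¹ • (Y-X) - w) := by abel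
              calc ‖‖t-s‖⁻¹ • (t-s) - w‖
                  ≤ ‖‖t-s‖⁻¹ • (t-s) - ‖Y-X‖⁻¹ • (Y-X)‖ + ‖‖Y-X‖⁻¹ • (Y-X) - w‖ := by
                    rw [hE]; exact norm_add_le _ _
                _ < r₃ := by linarith only [hdev, hq, hr₃sum]
          have hGC : (s - t) ∈ Γ.cone t ∨ (inner ℝ (Γ.axis t) (s - t) : ℝ) = 0 := by
            rcases hO with hO | hO
            · exact goodSet_cone Γ ws hws w r₃ htT.1 hO
            · rcases goodSet_cone Γ ws hws w r₃ htT.1 hO with hcc | hcc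
              · left
                have h0 := neg_mem_doubleCone hcc
                rwa [neg_neg] at h0
              · right
                rw [inner_neg_right] at hcc
                linarith only [hcc]
          rcases hGC with hcc | hcc
          · exact absurd (hκle s t hdst (Or.inr hcc)) hnk
          · exact hcc
        · have hempty : {s : Euc d | ((s,t) ∈ S ×ˢ T) ∧ ¬ κ ≤ k s t} = ∅ := by
            ext s
            constructor
            · rintro ⟨⟨_, h2⟩, _⟩
              exact absurd h2 htT
            · intro ht
              exact absurd ht (Set.notMem_empty s)
          rw [hempty]; exact measure_empty
      have hlb := prod_lintegral_lb' k hkmeas hSm hTm κ hnull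
      have hvolS : volume S = ENNReal.ofReal (δ*h) ^ d := volume_cube d hδh X
      have hvT : ENNReal.ofReal (δ*h) ^ d * ((N:ℝ≥0∞))⁻¹ ≤ volume T := by
        have h1 : volume (cube d (δ*h) Y) ≤ N * volume T := hwselvol Y
        rw [volume_cube d hδh] at h1
        calc ENNReal.ofReal (δ*h) ^ d * ((N:ℝ≥0∞))⁻¹
            ≤ ((N:ℝ≥0∞) * volume T) * ((N:ℝ≥0∞))⁻¹ := mul_le_mul_left h1 _
          _ = volume T := by
              rw [mul_comm (N:ℝ≥0∞) _, mul_assoc, ENNReal.mul_inv_cancel hNne hNtop, mul_one]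
      have hVST : Vlow ≤ volume S * volume T := by
        rw [hVlowdef, hvolS]
        exact mul_le_mul_right hvT _
      have hsub : S ×ˢ T ⊆ (cube d h X) ×ˢ (cube d h Y) :=
        Set.prod_mono (cube_subset d hcsub X)
          (Set.inter_subset_right.trans (cube_subset d hcsub Y))
      calc κ * Vlow ≤ κ * (volume S * volume T) := mul_le_mul_right hVST _
        _ ≤ ∫⁻ p in S ×ˢ T, k p.1 p.2 := hlb
        _ ≤ _ := lintegral_mono_set hsub
  -- final assembly
  set β : ℝ := Λ⁻¹ * ((2:ℝ)^(d+2))⁻¹ * (δ^(2*d) * (N:ℝ)⁻¹) with hβdef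
  have hβ0 : 0 < β := by
    have h1 : (0:ℝ) < (N:ℝ)⁻¹ := inv_pos.mpr hNR
    have h2 : (0:ℝ) < ((2:ℝ)^(d+2))⁻¹ := by positivity
    have h3 : (0:ℝ) < Λ⁻¹ := inv_pos.mpr hΛ0
    have h4 : (0:ℝ) < δ^(2*d) := by positivity
    exact mul_pos (mul_pos h3 h2) (mul_pos h4 h1)
  have hstX : stbl d α X Y = ENNReal.ofReal D ^ e := rfl
  have hLHS : (ENNReal.ofReal C)⁻¹ * indSum Γh X Y * stbl d α X Y
      ≤ ENNReal.ofReal β * ENNReal.ofReal D ^ e := by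
    rw [hstX]
    refine mul_le_mul_left ?_ _
    have hind2 : indSum Γh X Y ≤ 2 := by
      simp only [indSum]
      calc (Γh.cone X).indicator (fun _ => (1:ℝ≥0∞)) (Y - X) +
          (Γh.cone Y).indicator (fun _ => (1:ℝ≥0∞)) (X - Y)
          ≤ 1 + 1 := add_le_add (indicator_le_one _ _) (indicator_le_one _ _)
        _ = 2 := one_add_one_eq_two
    have hC2β : C⁻¹ * 2 ≤ β := by
      have hCC₂ : C₂ ≤ C := le_max_right _ _
      have hprod : C₂ * β = 2 := by
        simp only [hC₂def, hβdef]
        field_simp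
      rw [inv_mul_le_iff₀ hC0]
      calc (2:ℝ) = C₂ * β := hprod.symm
        _ ≤ C * β := mul_le_mul_of_nonneg_right hCC₂ hβ0.le
    calc (ENNReal.ofReal C)⁻¹ * indSum Γh X Y
        ≤ (ENNReal.ofReal C)⁻¹ * 2 := mul_le_mul_right hind2 _
      _ = ENNReal.ofReal (C⁻¹ * 2) := by
          rw [ENNReal.ofReal_mul (by positivity), ENNReal.ofReal_inv_of_pos hC0,
            ENNReal.ofReal_ofNat]
      _ ≤ ENNReal.ofReal β := ENNReal.ofReal_le_ofReal hC2β
  have hA0 : ENNReal.ofReal (h^(2*d)) ≠ 0 :=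
    (ENNReal.ofReal_pos.mpr (by positivity)).ne'
  have hAt : ENNReal.ofReal (h^(2*d)) ≠ ⊤ := ENNReal.ofReal_ne_top
  have hRHS : ENNReal.ofReal β * ENNReal.ofReal D ^ e ≤
      (ENNReal.ofReal (h^(2*d)))⁻¹ * (∫⁻ p in (cube d h X) ×ˢ (cube d h Y), k p.1 p.2) := by
    have hstep : ENNReal.ofReal (h^(2*d)) * (ENNReal.ofReal β * ENNReal.ofReal D ^ e) ≤
        κ * Vlow := by
      have hVof : Vlow = ENNReal.ofReal ((δ*h)^d * ((δ*h)^d * (N:ℝ)⁻¹)) := by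
        have e1 : ENNReal.ofReal ((δ*h)^d * ((δ*h)^d * (N:ℝ)⁻¹))
            = ENNReal.ofReal ((δ*h)^d) * ENNReal.ofReal ((δ*h)^d * (N:ℝ)⁻¹) :=
          ENNReal.ofReal_mul (by positivity)
        have e2 : ENNReal.ofReal ((δ*h)^d * (N:ℝ)⁻¹)
            = ENNReal.ofReal ((δ*h)^d) * ENNReal.ofReal ((N:ℝ)⁻¹) :=
          ENNReal.ofReal_mul (by positivity)
        rw [hVlowdef, e1, e2, ENNReal.ofReal_inv_of_pos hNR, ENNReal.ofReal_natCast,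
          ENNReal.ofReal_pow hδh.le]
      have h2D : ENNReal.ofReal (2*D) ^ e = ENNReal.ofReal 2 ^ e * ENNReal.ofReal D ^ e := by
        rw [ENNReal.ofReal_mul (by norm_num)]
        exact ENNReal.mul_rpow_of_ne_zero (by simp) (ENNReal.ofReal_pos.mpr hD0).ne' e
      have h2e : ENNReal.ofReal (((2:ℝ)^(d+2))⁻¹) ≤ ENNReal.ofReal 2 ^ e := by
        have h3 : ENNReal.ofReal 2 ^ (-((d:ℝ)+2)) ≤ ENNReal.ofReal 2 ^ e :=
          ENNReal.rpow_le_rpow_of_exponent_le (by simp [ENNReal.one_le_ofReal]) he2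
        have h4 : ENNReal.ofReal 2 ^ (-((d:ℝ)+2)) = ENNReal.ofReal (((2:ℝ)^(d+2))⁻¹) := by
          rw [ENNReal.ofReal_rpow_of_pos two_pos]
          congr 1
          rw [Real.rpow_neg (by norm_num),
            show ((d:ℝ)+2) = ((d+2:ℕ):ℝ) by push_cast; ring, Real.rpow_natCast]
        rw [← h4]; exact h3
      rw [hκdef, hVof, h2D]
      calc ENNReal.ofReal (h^(2*d)) * (ENNReal.ofReal β * ENNReal.ofReal D ^ e)
          = ENNReal.ofReal (h^(2*d) * β) * ENNReal.ofReal D ^ e := by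
            have em : ENNReal.ofReal (h^(2*d) * β)
                = ENNReal.ofReal (h^(2*d)) * ENNReal.ofReal β :=
              ENNReal.ofReal_mul (by positivity)
            rw [em, mul_assoc]
        _ ≤ (ENNReal.ofReal Λ⁻¹ * ENNReal.ofReal (((2:ℝ)^(d+2))⁻¹) *
              ENNReal.ofReal ((δ*h)^d * ((δ*h)^d * (N:ℝ)⁻¹))) * ENNReal.ofReal D ^ e := by
            refine mul_le_mul_left ?_ _
            rw [← ENNReal.ofReal_mul (by positivity), ← ENNReal.ofReal_mul (by positivity)]
            apply ENNReal.ofReal_le_ofReal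
            apply le_of_eq
            simp only [hβdef]
            ring
        _ ≤ (ENNReal.ofReal Λ⁻¹ * (ENNReal.ofReal 2 ^ e) *
              ENNReal.ofReal ((δ*h)^d * ((δ*h)^d * (N:ℝ)⁻¹))) * ENNReal.ofReal D ^ e :=
            mul_le_mul_left (mul_le_mul_left (mul_le_mul_right h2e _) _) _
        _ = ENNReal.ofReal Λ⁻¹ * (ENNReal.ofReal 2 ^ e * ENNReal.ofReal D ^ e) *
              ENNReal.ofReal ((δ*h)^d * ((δ*h)^d * (N:ℝ)⁻¹)) := by
            ring
    calc ENNReal.ofReal β * ENNReal.ofReal D ^ e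
        = (ENNReal.ofReal (h^(2*d)))⁻¹ *
          (ENNReal.ofReal (h^(2*d)) * (ENNReal.ofReal β * ENNReal.ofReal D ^ e)) := by
          rw [← mul_assoc, ENNReal.inv_mul_cancel hA0 hAt, one_mul]
      _ ≤ (ENNReal.ofReal (h^(2*d)))⁻¹ * (κ * Vlow) := mul_le_mul_right hstep _
      _ ≤ _ := mul_le_mul_right hIlow _
  exact le_trans hLHS hRHS
end
end
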